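/- arXiv:1811.02717 — 6 statements merged into one kernel-verified Lean document; each statement's English description precedes it below -/
import Mathlib

section
/- Let a < b be real numbers, Ψ : ℝ → ℝ strictly increasing and continuously differentiable on [a,b] with Ψ'(t) > 0 for all t ∈ [a,b], and let α > 0. Suppose f = h ∘ Ψ where h : ℝ → ℝ is real-analytic with power series converging on all of ℝ, and write f⁽ⁿ⁾(x) := h⁽ⁿ⁾(Ψ(x)). Then for every x ∈ (a,b], the Ψ-Riemann–Liouville fractional integral of f admits the convergent series expansion (I^{α;Ψ} f)(x) = Σ_{n=0}^∞ binom(−α, n) · f⁽ⁿ⁾(x) · (Ψ(x) − Ψ(a))^{α+n} / Γ(α+n+1). -/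
open Real

/-- Generalized binomial coefficient `binom(γ, n) = γ(γ-1)⋯(γ-n+1)/n!`. -/
noncomputable def genBinom (γ : ℝ) (n : ℕ) : ℝ :=
  (∏ i ∈ Finset.range n, (γ - (i : ℝ))) / (n.factorial : ℝ)

/-- Ψ-Riemann–Liouville fractional integral of order `α` with base point `a`;
by convention the order-0 integral is the identity. -/
noncomputable def psiI (a : ℝ) (Ψ f : ℝ → ℝ) (α : ℝ) (x : ℝ) : ℝ :=
  if α = 0 then f x
  else (Real.Gamma α)⁻¹ * ∫ t in a..x, deriv Ψ t * (Ψ x - Ψ t) ^ (α - 1) * f t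

/-- Ψ-Riemann–Liouville fractional derivative of order `γ` (for `γ ≤ 0` it is the
fractional integral of order `-γ`, the order-0 case being the identity). -/
noncomputable def psiRLD (a : ℝ) (Ψ f : ℝ → ℝ) (γ : ℝ) (x : ℝ) : ℝ :=
  if γ ≤ 0 then psiI a Ψ f (-γ) x
  else (deriv Ψ x)⁻¹ * deriv (fun y => psiI a Ψ f (1 - γ) y) x

/-- Ψ-Caputo fractional derivative of order `γ` (for `γ ≤ 0` it is the
fractional integral of order `-γ`). -/
noncomputable def psiCD (a : ℝ) (Ψ f : ℝ → ℝ) (γ : ℝ) (x : ℝ) : ℝ :=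
  if γ ≤ 0 then psiI a Ψ f (-γ) x
  else psiI a Ψ (fun t => (deriv Ψ t)⁻¹ * deriv f t) (1 - γ) x

/-- Ψ-Hilfer fractional derivative of order `α` and type `β`. -/
noncomputable def psiHD (a : ℝ) (Ψ f : ℝ → ℝ) (α β : ℝ) (x : ℝ) : ℝ :=
  psiI a Ψ
    (fun y => (deriv Ψ y)⁻¹ * deriv (fun z => psiI a Ψ f ((1 - β) * (1 - α)) z) y)
    (β * (1 - α)) x

/-- Classical Riemann–Liouville fractional integral with base point `a`. -/
noncomputable def rlI (a : ℝ) (α : ℝ) (f : ℝ → ℝ) (x : ℝ) : ℝ :=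
  if α = 0 then f x
  else (Real.Gamma α)⁻¹ * ∫ t in a..x, (x - t) ^ (α - 1) * f t

/-- Classical Riemann–Liouville fractional derivative (fractional integral for `γ ≤ 0`). -/
noncomputable def rlD (a : ℝ) (γ : ℝ) (f : ℝ → ℝ) (x : ℝ) : ℝ :=
  if γ ≤ 0 then rlI a (-γ) f x
  else deriv (fun y => rlI a (1 - γ) f y) x

/-- Classical Caputo fractional derivative (fractional integral for `γ ≤ 0`). -/
noncomputable def capD (a : ℝ) (γ : ℝ) (f : ℝ → ℝ) (x : ℝ) : ℝ :=
  if γ ≤ 0 then rlI a (-γ) f x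
  else rlI a (1 - γ) (deriv f) x

/-- Classical Hilfer fractional derivative of order `α` and type `β`. -/
noncomputable def hilD (a : ℝ) (α β : ℝ) (f : ℝ → ℝ) (x : ℝ) : ℝ :=
  rlI a (β * (1 - α))
    (fun y => deriv (fun z => rlI a ((1 - β) * (1 - α)) f z) y) x

/-- Hadamard fractional integral with base point `a`. -/
noncomputable def hadI (a : ℝ) (α : ℝ) (f : ℝ → ℝ) (x : ℝ) : ℝ :=
  if α = 0 then f x
  else (Real.Gamma α)⁻¹ * ∫ t in a..x, (Real.log x - Real.log t) ^ (α - 1) * f t / t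

/-- Caputo–Hadamard fractional derivative (Hadamard fractional integral for `γ ≤ 0`). -/
noncomputable def chD (a : ℝ) (γ : ℝ) (f : ℝ → ℝ) (x : ℝ) : ℝ :=
  if γ ≤ 0 then hadI a (-γ) f x
  else hadI a (1 - γ) (fun t => t * deriv f t) x

/-- `h` is real-analytic with a power series converging on all of `ℝ`. -/
def EntireReal (h : ℝ → ℝ) : Prop :=
  ∃ p : FormalMultilinearSeries ℝ ℝ ℝ, HasFPowerSeriesOnBall h p 0 ⊤


private lemma myGamma_add_nat (α : ℝ) (hα : 0 < α) (n : ℕ) :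
    Real.Gamma (α + n) = Real.Gamma α * ∏ i ∈ Finset.range n, (α + i) := by
  induction n with
  | zero => simp
  | succ k ih =>
    have h1 : α + ((k : ℕ) + 1 : ℕ) = (α + k) + 1 := by push_cast; ring
    rw [h1, Real.Gamma_add_one (by positivity), ih, Finset.prod_range_succ]; ring

private lemma genBinom_div_Gamma (α : ℝ) (hα : 0 < α) (n : ℕ) :
    genBinom (-α) n / Real.Gamma (α + n + 1)
      = (-1) ^ n * ((Real.Gamma α)⁻¹ * ((n.factorial : ℝ)⁻¹ * (α + n)⁻¹)) := by
  have hprodpos : 0 < ∏ i ∈ Finset.range n, (α + (i : ℝ)) :=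
    Finset.prod_pos fun i _ => by positivity
  have hGpos : 0 < Real.Gamma α := Real.Gamma_pos_of_pos hα
  have hfact : (n.factorial : ℝ) ≠ 0 := Nat.cast_ne_zero.2 n.factorial_ne_zero
  have hαn : (α + (n : ℝ)) ≠ 0 := by positivity
  have hneg : ∏ i ∈ Finset.range n, (-α - (i : ℝ))
      = (-1) ^ n * ∏ i ∈ Finset.range n, (α + (i : ℝ)) := by
    calc ∏ i ∈ Finset.range n, (-α - (i : ℝ))
        = ∏ i ∈ Finset.range n, (-1) * (α + (i : ℝ)) :=
          Finset.prod_congr rfl fun i _ => by ring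
      _ = (-1) ^ n * ∏ i ∈ Finset.range n, (α + (i : ℝ)) := by
          rw [Finset.prod_mul_distrib, Finset.prod_const, Finset.card_range]
  have hG1 : Real.Gamma (α + n + 1)
      = (α + n) * (Real.Gamma α * ∏ i ∈ Finset.range n, (α + (i : ℝ))) := by
    rw [Real.Gamma_add_one hαn, myGamma_add_nat α hα n]
  unfold genBinom
  rw [hneg, hG1]
  field_simp

/-- series expansion of the Ψ-Riemann–Liouville fractional integral. -/
theorem psiI_series_expansion
    (a b : ℝ) (hab : a < b) (Ψ : ℝ → ℝ)
    (hΨmono : StrictMonoOn Ψ (Set.Icc a b))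
    (hΨC1 : ContDiffOn ℝ 1 Ψ (Set.Icc a b))
    (hΨpos : ∀ t ∈ Set.Icc a b, 0 < deriv Ψ t)
    (α : ℝ) (hα : 0 < α)
    (f h : ℝ → ℝ) (hf : f = fun t => h (Ψ t))
    (hh : EntireReal h)
    (x : ℝ) (hx : x ∈ Set.Ioc a b) :
    HasSum
      (fun n : ℕ => genBinom (-α) n * iteratedDeriv n h (Ψ x) *
        (Ψ x - Ψ a) ^ (α + n) / Real.Gamma (α + n + 1))
      (psiI a Ψ f α x) := by
  obtain ⟨hax, hxb⟩ := hx
  obtain ⟨p, hp⟩ := hh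
  have haI : a ∈ Set.Icc a b := ⟨le_rfl, hab.le⟩
  have hxI : x ∈ Set.Icc a b := ⟨hax.le, hxb⟩
  have hAX : Ψ a < Ψ x := hΨmono haI hxI hax
  have hXA' : (0 : ℝ) < Ψ x - Ψ a := sub_pos.2 hAX
  -- power series of h centered at Ψ x
  have hq : HasFPowerSeriesOnBall h (p.changeOrigin (Ψ x)) (Ψ x) ⊤ := by
    simpa using hp.changeOrigin (y := Ψ x) (by simp)
  set q := p.changeOrigin (Ψ x) with hqdef
  have key : ∀ (n : ℕ) (y : ℝ),
      iteratedFDeriv ℝ n h (Ψ x) (fun _ => y) = y ^ n * iteratedDeriv n h (Ψ x) := by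
    intro n y
    rw [iteratedDeriv]
    have h2 := (iteratedFDeriv ℝ n h (Ψ x)).map_smul_univ (fun _ => y) (fun _ => (1 : ℝ))
    simpa [smul_eq_mul] using h2
  set c : ℕ → ℝ := fun n => (n.factorial : ℝ)⁻¹ * iteratedDeriv n h (Ψ x) with hcdef
  have hTaylor : ∀ u : ℝ, HasSum (fun n => c n * (u - Ψ x) ^ n) (h u) := by
    intro u
    have hy : (u - Ψ x) ∈ Metric.eball (0 : ℝ) ⊤ := by simp
    have h2 := hq.hasSum_iteratedFDeriv (y := u - Ψ x) hy
    simp only [key, smul_eq_mul] at h2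
    have e1 : (fun n => c n * (u - Ψ x) ^ n)
        = fun n => (n.factorial : ℝ)⁻¹ * ((u - Ψ x) ^ n * iteratedDeriv n h (Ψ x)) := by
      funext n; simp only [hcdef]; ring
    rw [e1]
    simpa using h2
  have hcq : ∀ n, |c n| ≤ ‖q n‖ := by
    intro n
    have h1 : iteratedDeriv n h (Ψ x) = n.factorial • q n (fun _ => (1 : ℝ)) := by
      rw [iteratedDeriv, ← hq.factorial_smul]
    have h3 : c n = q n (fun _ => (1 : ℝ)) := by
      rw [hcdef]
      simp only [h1, nsmul_eq_mul, ← mul_assoc,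
        inv_mul_cancel₀ (Nat.cast_ne_zero.2 n.factorial_ne_zero : (n.factorial : ℝ) ≠ 0), one_mul]
    have h2 := (q n).le_opNorm (fun _ => (1 : ℝ))
    rw [h3, ← Real.norm_eq_abs]
    simpa using h2
  -- image of interval under Ψ
  have himage : Ψ '' Set.Ioo a x = Set.Ioo (Ψ a) (Ψ x) := by
    apply Set.Subset.antisymm
    · rintro _ ⟨t, ht, rfl⟩
      have htI : t ∈ Set.Icc a b := ⟨ht.1.le, ht.2.le.trans hxb⟩
      exact ⟨hΨmono haI htI ht.1, hΨmono htI hxI ht.2⟩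
    · exact fun u hu => intermediate_value_Ioo hax.le
        (hΨC1.continuousOn.mono (Set.Icc_subset_Icc le_rfl hxb)) hu
  have hderiv : ∀ t ∈ Set.Ioo a x, HasDerivWithinAt Ψ (deriv Ψ t) (Set.Ioo a x) t := by
    intro t ht
    have htb : t ∈ Set.Ioo a b := ⟨ht.1, ht.2.trans_le hxb⟩
    have h1 : DifferentiableOn ℝ Ψ (Set.Icc a b) := hΨC1.differentiableOn one_ne_zero
    have h2 : Set.Icc a b ∈ nhds t := Icc_mem_nhds htb.1 htb.2
    exact (((h1 t (Set.mem_Icc_of_Ioo htb)).differentiableAt h2).hasDerivAt).hasDerivWithinAt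
  have hinj : Set.InjOn Ψ (Set.Ioo a x) :=
    hΨmono.injOn.mono (Set.Ioo_subset_Icc_self.trans (Set.Icc_subset_Icc le_rfl hxb))
  -- substitution step
  have step1 : psiI a Ψ f α x
      = (Real.Gamma α)⁻¹ * ∫ u in Set.Ioo (Ψ a) (Ψ x), (Ψ x - u) ^ (α - 1) * h u := by
    rw [psiI, if_neg hα.ne']
    congr 1
    rw [intervalIntegral.integral_of_le hax.le, MeasureTheory.integral_Ioc_eq_integral_Ioo,
      ← himage,
      MeasureTheory.integral_image_eq_integral_abs_deriv_smul measurableSet_Ioo hderiv hinj]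
    refine MeasureTheory.setIntegral_congr_fun measurableSet_Ioo fun t ht => ?_
    have hpos := hΨpos t ⟨ht.1.le, ht.2.le.trans hxb⟩
    rw [hf]
    simp only [smul_eq_mul, abs_of_pos hpos]
    ring
  -- define term functions
  set F : ℕ → ℝ → ℝ := fun n u => (Ψ x - u) ^ (α - 1) * (c n * (u - Ψ x) ^ n) with hFdef
  have hFeq : ∀ n : ℕ, ∀ u ∈ Set.Ioo (Ψ a) (Ψ x),
      F n u = (c n * (-1) ^ n) * (Ψ x - u) ^ (α + n - 1) := by
    intro n u hu
    have h0 : (0 : ℝ) < Ψ x - u := sub_pos.2 hu.2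
    have h1 : (Ψ x - u) ^ (α - 1) * (Ψ x - u) ^ (n : ℕ) = (Ψ x - u) ^ (α + n - 1) := by
      rw [← Real.rpow_natCast (Ψ x - u) n, ← Real.rpow_add h0]
      ring_nf
    have h2 : (u - Ψ x) ^ n = (-1) ^ n * (Ψ x - u) ^ n := by
      rw [show u - Ψ x = -(Ψ x - u) by ring, neg_pow]
    rw [hFdef]
    simp only
    rw [h2, ← h1]
    ring
  -- model integrals
  have model_intble : ∀ β : ℝ, 0 < β →
      MeasureTheory.IntegrableOn (fun u => (Ψ x - u) ^ (β - 1)) (Set.Ioo (Ψ a) (Ψ x)) := by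
    intro β hβ
    have h1 : IntervalIntegrable (fun v : ℝ => v ^ (β - 1)) MeasureTheory.volume
        (Ψ x - Ψ a) (Ψ x - Ψ x) := intervalIntegral.intervalIntegrable_rpow' (by linarith)
    have h2 := h1.comp_sub_left (Ψ x)
    simp only [sub_sub_cancel, sub_self, sub_zero] at h2
    exact ((intervalIntegrable_iff_integrableOn_Ioc_of_le hAX.le).1 h2).mono_set
      Set.Ioo_subset_Ioc_self
  have model_int : ∀ β : ℝ, 0 < β →
      (∫ u in Set.Ioo (Ψ a) (Ψ x), (Ψ x - u) ^ (β - 1)) = (Ψ x - Ψ a) ^ β / β := by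
    intro β hβ
    rw [← MeasureTheory.integral_Ioc_eq_integral_Ioo, ← intervalIntegral.integral_of_le hAX.le,
      intervalIntegral.integral_comp_sub_left (fun v : ℝ => v ^ (β - 1)) (Ψ x), sub_self,
      integral_rpow (Or.inl (by linarith : (-1 : ℝ) < β - 1)), sub_add_cancel,
      Real.zero_rpow hβ.ne', sub_zero]
  -- integrability of the terms
  have hF_int : ∀ n : ℕ, MeasureTheory.IntegrableOn (F n) (Set.Ioo (Ψ a) (Ψ x)) := by
    intro n
    have hm := (model_intble (α + n) (by positivity)).const_mul (c n * (-1) ^ n)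
    apply hm.congr
    filter_upwards [MeasureTheory.ae_restrict_mem measurableSet_Ioo] with u hu
    exact (hFeq n u hu).symm
  -- value of norm integrals
  have hF_norm : ∀ n : ℕ, (∫ u in Set.Ioo (Ψ a) (Ψ x), ‖F n u‖)
      = |c n| * ((Ψ x - Ψ a) ^ (α + n) / (α + n)) := by
    intro n
    rw [MeasureTheory.setIntegral_congr_fun measurableSet_Ioo
        (g := fun u => |c n| * (Ψ x - u) ^ (α + n - 1)) ?_]
    · rw [MeasureTheory.integral_const_mul, model_int (α + n) (by positivity)]
    · intro u hu
      show ‖F n u‖ = |c n| * (Ψ x - u) ^ (α + (n:ℝ) - 1)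
      rw [Real.norm_eq_abs, hFeq n u hu, abs_mul, abs_mul, abs_pow, abs_neg, abs_one, one_pow,
        mul_one, abs_of_nonneg (Real.rpow_nonneg (sub_pos.2 hu.2).le _)]
  -- summability
  have hg0 : Summable fun n => ‖q n‖ * (Ψ x - Ψ a) ^ n := by
    have h2 := q.summable_norm_mul_pow (r := ‖Ψ x - Ψ a‖₊)
      (by rw [top_le_iff.1 hq.r_le]; exact ENNReal.coe_lt_top)
    simpa [coe_nnnorm, Real.norm_eq_abs, abs_of_pos hXA'] using h2
  have hF_sum : Summable fun n : ℕ => ∫ u in Set.Ioo (Ψ a) (Ψ x), ‖F n u‖ := by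
    rw [funext hF_norm]
    refine Summable.of_nonneg_of_le (fun n => by positivity) (fun n => ?_)
      (hg0.mul_right ((Ψ x - Ψ a) ^ α / α))
    calc |c n| * ((Ψ x - Ψ a) ^ (α + (n : ℝ)) / (α + n))
        ≤ ‖q n‖ * ((Ψ x - Ψ a) ^ (α + (n : ℝ)) / α) := by
          gcongr
          · exact hcq n
          · linarith [Nat.cast_nonneg (α := ℝ) n]
      _ = ‖q n‖ * (Ψ x - Ψ a) ^ n * ((Ψ x - Ψ a) ^ α / α) := by
          rw [Real.rpow_add hXA', Real.rpow_natCast]; ring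
  -- interchange sum and integral
  have main := MeasureTheory.hasSum_integral_of_summable_integral_norm
    (μ := MeasureTheory.volume.restrict (Set.Ioo (Ψ a) (Ψ x))) hF_int hF_sum
  have hval : (∫ u in Set.Ioo (Ψ a) (Ψ x), ∑' n, F n u)
      = ∫ u in Set.Ioo (Ψ a) (Ψ x), (Ψ x - u) ^ (α - 1) * h u :=
    MeasureTheory.setIntegral_congr_fun measurableSet_Ioo fun u _ =>
      ((hTaylor u).mul_left ((Ψ x - u) ^ (α - 1))).tsum_eq
  rw [hval] at main
  have hterm : ∀ n : ℕ, (∫ u in Set.Ioo (Ψ a) (Ψ x), F n u)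
      = (c n * (-1) ^ n) * ((Ψ x - Ψ a) ^ (α + n) / (α + n)) := by
    intro n
    rw [MeasureTheory.setIntegral_congr_fun measurableSet_Ioo (hFeq n),
      MeasureTheory.integral_const_mul, model_int (α + n) (by positivity)]
  rw [step1]
  have final := main.mul_left (Real.Gamma α)⁻¹
  have hfun : (fun n : ℕ => genBinom (-α) n * iteratedDeriv n h (Ψ x) *
        (Ψ x - Ψ a) ^ (α + n) / Real.Gamma (α + n + 1))
      = fun n : ℕ => (Real.Gamma α)⁻¹ * ∫ u in Set.Ioo (Ψ a) (Ψ x), F n u := by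
    funext n
    rw [hterm n]
    have e : genBinom (-α) n * iteratedDeriv n h (Ψ x) * (Ψ x - Ψ a) ^ (α + (n : ℝ))
          / Real.Gamma (α + n + 1)
        = (genBinom (-α) n / Real.Gamma (α + n + 1)) * iteratedDeriv n h (Ψ x) *
          (Ψ x - Ψ a) ^ (α + (n : ℝ)) := by ring
    rw [e, genBinom_div_Gamma α hα n, hcdef]
    simp only
    ring
  rw [hfun]
  exact final
end

section
/- Let a < b be real numbers, Ψ : ℝ → ℝ strictly increasing and continuously differentiable on [a,b] with Ψ'(t) > 0 for all t ∈ [a,b], and let α > 0. Suppose f = h ∘ Ψ and g = w ∘ Ψ where h, w : ℝ → ℝ are real-analytic with power series converging on all of ℝ, and write f⁽ᵏ⁾(x) := h⁽ᵏ⁾(Ψ(x)). Then for every x ∈ (a,b], the Ψ-Riemann–Liouville fractional integral of the product f·g satisfies (I^{α;Ψ}(f·g))(x) = Σ_{k=0}^∞ binom(−α, k) · f⁽ᵏ⁾(x) · (I^{α+k;Ψ} g)(x), the series converging. -/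
open Real MeasureTheory

open MeasureTheory in
private lemma gamma_prod_aux (α : ℝ) (hα : 0 < α) (n : ℕ) :
    Real.Gamma (α + n) = (∏ i ∈ Finset.range n, (α + (i : ℝ))) * Real.Gamma α := by
  induction n with
  | zero => simp
  | succ n ih =>
    have hne : α + (n : ℝ) ≠ 0 := by
      have : (0:ℝ) ≤ (n:ℝ) := Nat.cast_nonneg n
      linarith
    rw [show α + ((n+1 : ℕ) : ℝ) = (α + (n:ℝ)) + 1 by push_cast; ring,
      Real.Gamma_add_one hne, ih, Finset.prod_range_succ]
    ring

private lemma genBinom_key (α : ℝ) (hα : 0 < α) (k : ℕ) :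
    genBinom (-α) k * (k.factorial : ℝ) * (Real.Gamma (α + k))⁻¹
      = (-1 : ℝ) ^ k * (Real.Gamma α)⁻¹ := by
  have hP : (0:ℝ) < ∏ i ∈ Finset.range k, (α + (i : ℝ)) :=
    Finset.prod_pos fun i _ => by
      have : (0:ℝ) ≤ (i:ℝ) := Nat.cast_nonneg i
      linarith
  have hneg : (∏ i ∈ Finset.range k, (-α - (i:ℝ)))
      = (-1:ℝ)^k * ∏ i ∈ Finset.range k, (α + (i:ℝ)) := by
    calc (∏ i ∈ Finset.range k, (-α - (i:ℝ)))
        = ∏ i ∈ Finset.range k, ((-1:ℝ) * (α + (i:ℝ))) :=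
          Finset.prod_congr rfl fun i _ => by ring
      _ = (∏ _i ∈ Finset.range k, (-1:ℝ)) * ∏ i ∈ Finset.range k, (α + (i:ℝ)) :=
          Finset.prod_mul_distrib
      _ = (-1:ℝ)^k * ∏ i ∈ Finset.range k, (α + (i:ℝ)) := by
          rw [Finset.prod_const, Finset.card_range]
  have h1 : Real.Gamma α ≠ 0 := (Real.Gamma_pos_of_pos hα).ne'
  have h3 : (k.factorial : ℝ) ≠ 0 := Nat.cast_ne_zero.2 k.factorial_ne_zero
  rw [genBinom, hneg, gamma_prod_aux α hα k]
  field_simp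

set_option maxHeartbeats 2000000 in
/-- Ψ-fractional integral of a product of two functions. -/
theorem psiI_product_series
    (a b : ℝ) (hab : a < b) (Ψ : ℝ → ℝ)
    (hΨmono : StrictMonoOn Ψ (Set.Icc a b))
    (hΨC1 : ContDiffOn ℝ 1 Ψ (Set.Icc a b))
    (hΨpos : ∀ t ∈ Set.Icc a b, 0 < deriv Ψ t)
    (α : ℝ) (hα : 0 < α)
    (f g h w : ℝ → ℝ)
    (hf : f = fun t => h (Ψ t)) (hg : g = fun t => w (Ψ t))
    (hh : EntireReal h) (hw : EntireReal w)
    (x : ℝ) (hx : x ∈ Set.Ioc a b) :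
    HasSum
      (fun k : ℕ => genBinom (-α) k * iteratedDeriv k h (Ψ x) * psiI a Ψ g (α + k) x)
      (psiI a Ψ (fun t => f t * g t) α x) := by
  obtain ⟨hax, hxb⟩ := hx
  set y := Ψ x with hy
  obtain ⟨p, hp⟩ := hh
  obtain ⟨pw, hpw⟩ := hw
  -- power series of h at y
  have hq : HasFPowerSeriesOnBall h (p.changeOrigin y) y ⊤ := by
    simpa using hp.changeOrigin (y := y) (by simp : (‖y‖₊ : ENNReal) < ⊤)
  set q := p.changeOrigin y with hqdef
  have hcoeff : ∀ k, iteratedDeriv k h y = (k.factorial : ℝ) * q.coeff k := by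
    intro k
    have h0 := hq.factorial_smul (1 : ℝ) k
    rw [iteratedDeriv_eq_iteratedFDeriv, ← h0,
      FormalMultilinearSeries.apply_eq_pow_smul_coeff]
    simp [nsmul_eq_mul]
  have hsum_pt : ∀ u : ℝ, HasSum (fun k => q.coeff k * (u - y) ^ k) (h u) := by
    intro u
    have hmem : (u - y) ∈ Metric.eball (0 : ℝ) ⊤ := by
      simp [Metric.mem_eball]
    have h0 := hq.hasSum hmem
    simp only [FormalMultilinearSeries.apply_eq_pow_smul_coeff, smul_eq_mul] at h0
    rw [show y + (u - y) = u by ring] at h0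
    simpa [mul_comm] using h0
  have hsummable : Summable (fun k => ‖q.coeff k‖ * (y - Ψ a) ^ k) := by
    have hRnn : 0 ≤ y - Ψ a := by
      have := hΨmono ⟨le_refl a, hab.le⟩ ⟨hax.le, hxb⟩ hax
      linarith
    have hrad : (ENNReal.ofNNReal (Real.toNNReal (y - Ψ a))) < q.radius := by
      have : (⊤ : ENNReal) ≤ q.radius := hq.r_le
      exact lt_of_lt_of_le ENNReal.coe_lt_top this
    have hs := q.summable_norm_mul_pow hrad
    simpa [FormalMultilinearSeries.norm_apply_eq_norm_coef,
      Real.coe_toNNReal _ hRnn] using hs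
  -- basic facts about Ψ
  have hΨcont : ContinuousOn Ψ (Set.Icc a b) := hΨC1.continuousOn
  have hsubI : Set.Ioo a x ⊆ Set.Icc a b := fun t ht =>
    ⟨ht.1.le, le_trans ht.2.le hxb⟩
  have hΨdrv : ∀ t ∈ Set.Ioo a x, HasDerivAt Ψ (deriv Ψ t) t := by
    intro t ht
    have hmem : Set.Icc a b ∈ nhds t := Icc_mem_nhds ht.1 (lt_of_lt_of_le ht.2 hxb)
    exact ((hΨC1.differentiableOn one_ne_zero).differentiableAt hmem).hasDerivAt
  have hΨlt : ∀ t ∈ Set.Ioo a x, Ψ t < y := fun t ht =>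
    hΨmono (hsubI ht) ⟨hax.le, hxb⟩ ht.2
  have hΨle : ∀ t ∈ Set.Icc a x, Ψ t ≤ y := by
    intro t ht
    rcases eq_or_lt_of_le ht.2 with h | h
    · rw [h]
    · exact (hΨmono ⟨ht.1, le_trans ht.2 hxb⟩ ⟨hax.le, hxb⟩ h).le
  set R := y - Ψ a with hR
  have hRpos : 0 < R := by
    have := hΨmono ⟨le_refl a, hab.le⟩ ⟨hax.le, hxb⟩ hax
    simp only [hR]; linarith
  -- continuity and bound of g
  have hwcont : Continuous w := by
    have h0 := hpw.continuousOn
    rw [Metric.emetric_ball_top] at h0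
    exact continuousOn_univ.mp h0
  have hgcont : ContinuousOn g (Set.Icc a b) := by
    rw [hg]; exact hwcont.comp_continuousOn hΨcont
  obtain ⟨C, hC⟩ := isCompact_Icc.exists_bound_of_continuousOn hgcont
  set C' := max C 0 with hC'def
  have hC'nn : 0 ≤ C' := le_max_right _ _
  have hgbd : ∀ t ∈ Set.Icc a b, |g t| ≤ C' := fun t ht =>
    le_trans (hC t ht) (le_max_left _ _)
  -- the singular kernel is integrable with explicit integral
  have hPhi : ∀ β : ℝ, 0 < β →
      IntegrableOn (fun t => deriv Ψ t * (y - Ψ t) ^ (β - 1)) (Set.Ioc a x) volume ∧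
      ∫ t in Set.Ioc a x, deriv Ψ t * (y - Ψ t) ^ (β - 1) = β⁻¹ * R ^ β := by
    intro β hβ
    set A : ℝ → ℝ := fun t => -(β⁻¹ * (y - Ψ t) ^ β) with hA
    have hAcont : ContinuousOn A (Set.Icc a x) := by
      apply ContinuousOn.neg
      apply continuousOn_const.mul
      exact (continuousOn_const.sub (hΨcont.mono (Set.Icc_subset_Icc_right hxb))).rpow_const
        (fun t ht => Or.inr hβ.le)
    have hAderiv : ∀ t ∈ Set.Ioo a x,
        HasDerivAt A (deriv Ψ t * (y - Ψ t) ^ (β - 1)) t := by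
      intro t ht
      have h1 : HasDerivAt (fun s => y - Ψ s) (-deriv Ψ t) t := (hΨdrv t ht).const_sub y
      have h2 := h1.rpow_const (p := β) (Or.inl (ne_of_gt (sub_pos.2 (hΨlt t ht))))
      have h3 := (h2.const_mul β⁻¹).neg
      refine h3.congr_deriv ?_
      rw [show β⁻¹ * (-deriv Ψ t * β * (y - Ψ t) ^ (β - 1)) = (β⁻¹ * β) * (-deriv Ψ t * (y - Ψ t) ^ (β - 1)) by ring, inv_mul_cancel₀ hβ.ne']
      ring
    have hnonneg : ∀ t ∈ Set.Ioo a x, 0 ≤ deriv Ψ t * (y - Ψ t) ^ (β - 1) := fun t ht =>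
      mul_nonneg (hΨpos t (hsubI ht)).le
        (Real.rpow_nonneg (sub_nonneg.2 (hΨle t ⟨ht.1.le, ht.2.le⟩)) _)
    have hint := intervalIntegral.integrableOn_deriv_of_nonneg hAcont hAderiv hnonneg
    refine ⟨hint, ?_⟩
    have heval : ∫ t in a..x, deriv Ψ t * (y - Ψ t) ^ (β - 1) = A x - A a := by
      apply intervalIntegral.integral_eq_sub_of_hasDerivAt_of_le hax.le hAcont hAderiv
      rw [intervalIntegrable_iff_integrableOn_Ioc_of_le hax.le]
      exact hint
    rw [← intervalIntegral.integral_of_le hax.le, heval, hA]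
    simp only [hy, sub_self, Real.zero_rpow hβ.ne', hR]
    ring
  -- the summands
  set G : ℕ → ℝ → ℝ := fun k t =>
    ((-1 : ℝ) ^ k * q.coeff k) * (deriv Ψ t * (y - Ψ t) ^ (α + k - 1) * g t) with hGdef
  have hβpos : ∀ k : ℕ, (0:ℝ) < α + k := fun k =>
    add_pos_of_pos_of_nonneg hα (Nat.cast_nonneg k)
  have hBmeas : ∀ k : ℕ, AEStronglyMeasurable
      (fun t => deriv Ψ t * (y - Ψ t) ^ (α + k - 1) * g t)
      (volume.restrict (Set.Ioo a x)) := by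
    intro k
    refine AEStronglyMeasurable.mul (AEStronglyMeasurable.mul ?_ ?_) ?_
    · exact (measurable_deriv Ψ).aestronglyMeasurable
    · refine ContinuousOn.aestronglyMeasurable ?_ measurableSet_Ioo
      exact (continuousOn_const.sub (hΨcont.mono hsubI)).rpow_const
        (fun t ht => Or.inl (ne_of_gt (sub_pos.2 (hΨlt t ht))))
    · exact (hgcont.mono hsubI).aestronglyMeasurable measurableSet_Ioo
  have hbd : ∀ k : ℕ, ∀ t ∈ Set.Ioo a x,
      ‖deriv Ψ t * (y - Ψ t) ^ (α + k - 1) * g t‖ ≤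
        C' * (deriv Ψ t * (y - Ψ t) ^ (α + k - 1)) := by
    intro k t ht
    have h1 : 0 ≤ deriv Ψ t * (y - Ψ t) ^ (α + k - 1) :=
      mul_nonneg (hΨpos t (hsubI ht)).le
        (Real.rpow_nonneg (sub_pos.2 (hΨlt t ht)).le _)
    rw [Real.norm_eq_abs, abs_mul, abs_of_nonneg h1, mul_comm C' _]
    exact mul_le_mul_of_nonneg_left (hgbd t (hsubI ht)) h1
  have hPhiIoo : ∀ k : ℕ, IntegrableOn
      (fun t => deriv Ψ t * (y - Ψ t) ^ (α + (k:ℝ) - 1)) (Set.Ioo a x) volume := fun k =>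
    ((hPhi (α + k) (hβpos k)).1).mono_set Set.Ioo_subset_Ioc_self
  have hBint : ∀ k : ℕ, IntegrableOn
      (fun t => deriv Ψ t * (y - Ψ t) ^ (α + k - 1) * g t) (Set.Ioo a x) volume := by
    intro k
    refine Integrable.mono' ((hPhiIoo k).const_mul C') (hBmeas k) ?_
    rw [ae_restrict_iff' measurableSet_Ioo]
    exact ae_of_all _ fun t ht => hbd k t ht
  have hGint : ∀ k : ℕ, Integrable (G k) (volume.restrict (Set.Ioo a x)) := fun k =>
    ((hBint k).const_mul _)
  -- bound for the integral of the norm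
  have hPhiIoo_eq : ∀ k : ℕ,
      ∫ t in Set.Ioo a x, deriv Ψ t * (y - Ψ t) ^ (α + (k:ℝ) - 1)
        = (α + k)⁻¹ * R ^ (α + (k:ℝ)) := by
    intro k
    rw [← integral_Ioc_eq_integral_Ioo]
    exact (hPhi (α + k) (hβpos k)).2
  have hnormint : ∀ k : ℕ, ∫ t in Set.Ioo a x, ‖G k t‖ ≤
      (C' * α⁻¹ * R ^ α) * (‖q.coeff k‖ * R ^ k) := by
    intro k
    have e1 : ∀ t, ‖G k t‖ = ‖q.coeff k‖ *
        ‖deriv Ψ t * (y - Ψ t) ^ (α + k - 1) * g t‖ := by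
      intro t
      simp only [hGdef, norm_mul, norm_pow, norm_neg, norm_one, one_pow, one_mul]
    calc ∫ t in Set.Ioo a x, ‖G k t‖
        = ‖q.coeff k‖ * ∫ t in Set.Ioo a x, ‖deriv Ψ t * (y - Ψ t) ^ (α + k - 1) * g t‖ := by
          rw [← integral_const_mul]; exact integral_congr_ae (ae_of_all _ e1)
      _ ≤ ‖q.coeff k‖ * ∫ t in Set.Ioo a x, C' * (deriv Ψ t * (y - Ψ t) ^ (α + k - 1)) := by
          refine mul_le_mul_of_nonneg_left ?_ (norm_nonneg _)
          refine integral_mono_ae ((hBint k).norm) ((hPhiIoo k).const_mul C')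
            ((ae_restrict_iff' measurableSet_Ioo).mpr
              (ae_of_all _ fun t ht => hbd k t ht))
      _ = ‖q.coeff k‖ * (C' * ((α + k)⁻¹ * R ^ (α + (k:ℝ)))) := by
          rw [integral_const_mul, hPhiIoo_eq k]
      _ ≤ ‖q.coeff k‖ * (C' * (α⁻¹ * R ^ (α + (k:ℝ)))) := by
          refine mul_le_mul_of_nonneg_left (mul_le_mul_of_nonneg_left ?_ hC'nn) (norm_nonneg _)
          refine mul_le_mul_of_nonneg_right ?_ (Real.rpow_nonneg hRpos.le _)
          exact inv_anti₀ hα (le_add_of_nonneg_right (Nat.cast_nonneg k))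
      _ = (C' * α⁻¹ * R ^ α) * (‖q.coeff k‖ * R ^ k) := by
          rw [Real.rpow_add hRpos, Real.rpow_natCast]
          ring
  have hsumm : Summable (fun k => ∫ t in Set.Ioo a x, ‖G k t‖) :=
    Summable.of_nonneg_of_le
      (fun k => integral_nonneg fun t => norm_nonneg _)
      hnormint (hsummable.mul_left _)
  have hmain := MeasureTheory.hasSum_integral_of_summable_integral_norm hGint hsumm
  -- pointwise sum of the series
  have hptws : ∀ t ∈ Set.Ioo a x, HasSum (fun k => G k t)
      (deriv Ψ t * (y - Ψ t) ^ (α - 1) * (f t * g t)) := by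
    intro t ht
    have hpos : 0 < y - Ψ t := sub_pos.2 (hΨlt t ht)
    have h1 := (hsum_pt (Ψ t)).mul_left (deriv Ψ t * (y - Ψ t) ^ (α - 1) * g t)
    have heq : ∀ k : ℕ, (deriv Ψ t * (y - Ψ t) ^ (α - 1) * g t) *
        (q.coeff k * (Ψ t - y) ^ k) = G k t := by
      intro k
      have e1 : (Ψ t - y) ^ k = (-1:ℝ)^k * (y - Ψ t) ^ k := by
        rw [show Ψ t - y = (-1:ℝ) * (y - Ψ t) by ring, mul_pow]
      have e2 : (y - Ψ t) ^ (α - 1) * (y - Ψ t) ^ (k:ℕ) = (y - Ψ t) ^ (α + k - 1) := by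
        rw [← Real.rpow_natCast (y - Ψ t) k, ← Real.rpow_add hpos]
        ring_nf
      simp only [hGdef]
      rw [e1, ← e2]
      ring
    have h2 : HasSum (fun k => G k t)
        (deriv Ψ t * (y - Ψ t) ^ (α - 1) * g t * h (Ψ t)) := (funext heq) ▸ h1
    have : f t = h (Ψ t) := by rw [hf]
    rw [this]
    convert h2 using 1
    ring
  have htsum_ae : ∫ t in Set.Ioo a x, (∑' k, G k t)
      = ∫ t in Set.Ioo a x, deriv Ψ t * (y - Ψ t) ^ (α - 1) * (f t * g t) := by
    exact integral_congr_ae ((ae_restrict_iff' measurableSet_Ioo).mpr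
      (ae_of_all _ fun t ht => (hptws t ht).tsum_eq))
  rw [htsum_ae] at hmain
  have hfinal := hmain.mul_left (Real.Gamma α)⁻¹
  have hpsiI_target : psiI a Ψ (fun t => f t * g t) α x = (Real.Gamma α)⁻¹ *
      ∫ t in Set.Ioo a x, deriv Ψ t * (y - Ψ t) ^ (α - 1) * (f t * g t) := by
    rw [psiI, if_neg hα.ne', intervalIntegral.integral_of_le hax.le,
      integral_Ioc_eq_integral_Ioo]
  have hterm : ∀ k : ℕ, genBinom (-α) k * iteratedDeriv k h y * psiI a Ψ g (α + k) x
      = (Real.Gamma α)⁻¹ * ∫ t in Set.Ioo a x, G k t := by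
    intro k
    rw [psiI, if_neg (hβpos k).ne', intervalIntegral.integral_of_le hax.le,
      integral_Ioc_eq_integral_Ioo]
    have e3 : ∫ t in Set.Ioo a x, G k t = ((-1:ℝ)^k * q.coeff k) *
        ∫ t in Set.Ioo a x, deriv Ψ t * (y - Ψ t) ^ (α + k - 1) * g t := by
      simp only [hGdef]
      rw [integral_const_mul]
    rw [e3, hcoeff k]
    have key := genBinom_key α hα k
    linear_combination (q.coeff k *
      ∫ t in Set.Ioo a x, deriv Ψ t * (y - Ψ t) ^ (α + k - 1) * g t) * key
  rw [hpsiI_target, funext hterm]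
  exact hfinal
end

section
/- (Leibniz type rule for the Ψ-Caputo derivative.) Let 0 < α < 1, a < b, Ψ : ℝ → ℝ strictly increasing and continuously differentiable on [a,b] with Ψ'(t) > 0 for all t ∈ [a,b]. Suppose f = h ∘ Ψ and g = w ∘ Ψ with h, w real-analytic with everywhere-convergent power series, and write f⁽ᵐ⁾(x) := h⁽ᵐ⁾(Ψ(x)). Then for every x ∈ (a,b): (^{C}D^{α;Ψ}(f·g))(x) = Σ_{m=0}^∞ binom(α, m) f⁽ᵐ⁾(x) (^{C}D^{α−m;Ψ} g)(x) + g(a)(f(x) − f(a)) (Ψ(x) − Ψ(a))^{−α} / Γ(1−α), the series converging. -/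
open Real

namespace LeibnizAux

open MeasureTheory Set intervalIntegral


/-- Taylor coefficient of `h` at `X`. -/
noncomputable def tc (h : ℝ → ℝ) (X : ℝ) (m : ℕ) : ℝ :=
  iteratedDeriv m h X / (m.factorial : ℝ)

lemma entire_differentiable {h : ℝ → ℝ} (hh : EntireReal h) : Differentiable ℝ h := by
  obtain ⟨p, hp⟩ := hh
  intro y
  have hy : y ∈ Metric.eball (0 : ℝ) ⊤ := by simp
  exact (hp.analyticAt_of_mem hy).differentiableAt

lemma entire_deriv {h : ℝ → ℝ} (hh : EntireReal h) : EntireReal (deriv h) := by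
  obtain ⟨p, hp⟩ := hh
  refine ⟨(ContinuousLinearMap.apply ℝ ℝ (1 : ℝ)).compFormalMultilinearSeries p.derivSeries, ?_⟩
  have h2 := (ContinuousLinearMap.apply ℝ ℝ (1 : ℝ)).comp_hasFPowerSeriesOnBall hp.fderiv
  have h3 : (ContinuousLinearMap.apply ℝ ℝ (1 : ℝ)) ∘ (fderiv ℝ h) = deriv h := by
    funext y
    simp [ContinuousLinearMap.apply_apply, fderiv_apply_one_eq_deriv]
  rwa [h3] at h2

lemma entire_q {h : ℝ → ℝ} (hh : EntireReal h) (X : ℝ) :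
    ∃ q : FormalMultilinearSeries ℝ ℝ ℝ, HasFPowerSeriesOnBall h q X ⊤ ∧
      ∀ n, q.coeff n = tc h X n := by
  obtain ⟨p, hp⟩ := hh
  have h2 := hp.changeOrigin (y := X) (by simp)
  rw [zero_add, ENNReal.top_sub_coe] at h2
  refine ⟨_, h2, fun n => ?_⟩
  have h3 := h2.factorial_smul (y := (1 : ℝ)) n
  rw [FormalMultilinearSeries.apply_eq_pow_smul_coeff, one_pow, one_smul,
    ← iteratedDeriv_eq_iteratedFDeriv] at h3
  rw [tc, ← h3, nsmul_eq_mul]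
  field_simp [Nat.factorial_ne_zero]

lemma entire_hasSum {h : ℝ → ℝ} (hh : EntireReal h) (X u : ℝ) :
    HasSum (fun m => tc h X m * (u - X) ^ m) (h u) := by
  obtain ⟨q, hq, hqc⟩ := entire_q hh X
  have hu : u - X ∈ Metric.eball (0 : ℝ) ⊤ := by simp
  have := hq.hasSum hu
  rw [show X + (u - X) = u by ring] at this
  refine this.congr_fun fun m => ?_
  rw [FormalMultilinearSeries.apply_eq_pow_smul_coeff, hqc, smul_eq_mul, mul_comm]

lemma entire_summable {h : ℝ → ℝ} (hh : EntireReal h) (X : ℝ) {s : ℝ} (hs : 0 ≤ s) :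
    Summable fun m => |tc h X m| * s ^ m := by
  obtain ⟨q, hq, hqc⟩ := entire_q hh X
  have hrad : (⊤ : ENNReal) ≤ q.radius := hq.r_le
  have hlt : ((s.toNNReal : NNReal) : ENNReal) < q.radius := lt_of_lt_of_le ENNReal.coe_lt_top hrad
  have := q.summable_norm_mul_pow hlt
  refine this.congr fun m => ?_
  rw [FormalMultilinearSeries.norm_apply_eq_norm_coef, hqc]
  rw [Real.norm_eq_abs, Real.coe_toNNReal s hs]

lemma tc_zero (h : ℝ → ℝ) (X : ℝ) : tc h X 0 = h X := by simp [tc]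

lemma tc_deriv {h : ℝ → ℝ} (X : ℝ) (m : ℕ) :
    tc (deriv h) X m = ((m : ℝ) + 1) * tc h X (m + 1) := by
  rw [tc, tc, ← iteratedDeriv_succ', Nat.factorial_succ]
  have h1 : (m.factorial : ℝ) ≠ 0 := Nat.cast_ne_zero.2 (Nat.factorial_ne_zero m)
  field_simp
  push_cast; ring



lemma intInt_eq_Ioo {A X : ℝ} (h : A ≤ X) (f : ℝ → ℝ) :
    ∫ u in A..X, f u = ∫ u in Ioo A X, f u := by
  rw [intervalIntegral.integral_of_le h, MeasureTheory.integral_Ioc_eq_integral_Ioo]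

lemma intervalIntegrable_rpow_mul {A X e : ℝ} (he : (-1 : ℝ) < e) {φ : ℝ → ℝ}
    (hφ : Continuous φ) :
    IntervalIntegrable (fun u => (X - u) ^ e * φ u) volume A X := by
  have h1 : IntervalIntegrable (fun v : ℝ => v ^ e) volume (X - A) (X - X) :=
    intervalIntegrable_rpow' he
  have h2 : IntervalIntegrable (fun u => (X - u) ^ e) volume A X := by
    have := h1.comp_sub_left X
    simpa using this
  exact h2.mul_continuousOn hφ.continuousOn

lemma integrableOn_rpow_mul {A X e : ℝ} (hAX : A < X) (he : (-1 : ℝ) < e) {φ : ℝ → ℝ}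
    (hφ : Continuous φ) : IntegrableOn (fun u => (X - u) ^ e * φ u) (Ioo A X) := by
  have h4 := (intervalIntegrable_iff_integrableOn_Ioc_of_le hAX.le).1
    (intervalIntegrable_rpow_mul he hφ)
  exact h4.mono_set Ioo_subset_Ioc_self

lemma subst_integral {a x : ℝ} {Ψ : ℝ → ℝ} (hax : a < x)
    (hΨc : ContinuousOn Ψ (Icc a x))
    (hder : ∀ t ∈ Ioo a x, HasDerivAt Ψ (deriv Ψ t) t)
    (hpos : ∀ t ∈ Ioo a x, 0 < deriv Ψ t)
    (hmono : StrictMonoOn Ψ (Icc a x))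
    (G : ℝ → ℝ) :
    ∫ t in Ioo a x, deriv Ψ t * G (Ψ t) = ∫ u in Ioo (Ψ a) (Ψ x), G u := by
  have himg : Ψ '' Ioo a x = Ioo (Ψ a) (Ψ x) := by
    apply Subset.antisymm
    · rintro _ ⟨t, ht, rfl⟩
      exact ⟨hmono (left_mem_Icc.2 hax.le) (Ioo_subset_Icc_self ht) ht.1,
             hmono (Ioo_subset_Icc_self ht) (right_mem_Icc.2 hax.le) ht.2⟩
    · exact intermediate_value_Ioo hax.le hΨc
  rw [← himg, integral_image_eq_integral_abs_deriv_smul measurableSet_Ioo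
      (fun t ht => (hder t ht).hasDerivWithinAt) (hmono.injOn.mono Ioo_subset_Icc_self) G]
  refine setIntegral_congr_fun measurableSet_Ioo fun t ht => ?_
  rw [abs_of_pos (hpos t ht), smul_eq_mul]

lemma gamma_prod {α : ℝ} (hα1 : α < 1) (k : ℕ) :
    Real.Gamma ((k : ℝ) + (1 - α)) =
      (∏ i ∈ Finset.range k, ((i : ℝ) + 1 - α)) * Real.Gamma (1 - α) := by
  induction k with
  | zero => simp
  | succ n ih =>
    have hpos : (0 : ℝ) < (n : ℝ) + (1 - α) := by
      have : (0 : ℝ) ≤ n := Nat.cast_nonneg n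
      linarith
    have harg : ((n + 1 : ℕ) : ℝ) + (1 - α) = ((n : ℝ) + (1 - α)) + 1 := by push_cast; ring
    rw [harg, Real.Gamma_add_one (ne_of_gt hpos), ih, Finset.prod_range_succ]
    ring

lemma key_coeff {α : ℝ} (hα1 : α < 1) (k : ℕ) :
    genBinom α (k + 1) * (Real.Gamma ((k : ℝ) + 1 - α))⁻¹ =
      (-1 : ℝ) ^ k * α / ((k + 1).factorial : ℝ) / Real.Gamma (1 - α) := by
  have hΓ1 : 0 < Real.Gamma (1 - α) := Real.Gamma_pos_of_pos (by linarith)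
  have hPpos : (0 : ℝ) < ∏ i ∈ Finset.range k, ((i : ℝ) + 1 - α) := by
    apply Finset.prod_pos
    intro i _
    have : (0 : ℝ) ≤ i := Nat.cast_nonneg i
    linarith
  have hGk : Real.Gamma ((k : ℝ) + 1 - α)
      = (∏ i ∈ Finset.range k, ((i : ℝ) + 1 - α)) * Real.Gamma (1 - α) := by
    rw [show (k : ℝ) + 1 - α = (k : ℝ) + (1 - α) by ring]
    exact gamma_prod hα1 k
  have hBin : genBinom α (k + 1)
      = (-1 : ℝ) ^ k * (∏ i ∈ Finset.range k, ((i : ℝ) + 1 - α)) * α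
        / ((k + 1).factorial : ℝ) := by
    rw [genBinom, Finset.prod_range_succ']
    congr 1
    push_cast
    rw [show (∏ i ∈ Finset.range k, (α - ((i : ℝ) + 1))) =
        ∏ i ∈ Finset.range k, (-1) * ((i : ℝ) + 1 - α) from
      Finset.prod_congr rfl fun i _ => by ring]
    rw [Finset.prod_mul_distrib, Finset.prod_const]
    simp
  have hfac : ((k + 1).factorial : ℝ) ≠ 0 := Nat.cast_ne_zero.2 (Nat.factorial_ne_zero _)
  rw [hBin, hGk]
  field_simp


lemma parts {A X : ℝ} (hAX : A < X) {w : ℝ → ℝ} (hw : Differentiable ℝ w)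
    (hw' : Continuous (deriv w)) {β : ℝ} (hβ : 0 < β) :
    ∫ u in Ioo A X, (X - u) ^ β * deriv w u
      = -((X - A) ^ β * w A) + β * ∫ u in Ioo A X, (X - u) ^ (β - 1) * w u := by
  have hcont : ContinuousOn (fun u => (X - u) ^ β * w u) (Icc A X) :=
    (((continuous_const.sub continuous_id).rpow_const fun u => Or.inr hβ.le).mul
      hw.continuous).continuousOn
  have hder : ∀ u ∈ Ioo A X,
      HasDerivWithinAt (fun v => (X - v) ^ β * w v)
        ((-β) * ((X - u) ^ (β - 1) * w u) + (X - u) ^ β * deriv w u) (Ioi u) u := by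
    intro u hu
    have h0 : X - u ≠ 0 := sub_ne_zero.2 (ne_of_gt hu.2)
    have hXu : HasDerivAt (fun v : ℝ => X - v) (-1) u := by
      exact (hasDerivAt_id u).const_sub X
    have h5 := hXu.rpow_const (p := β) (Or.inl h0)
    have h6 := h5.mul (hw u).hasDerivAt
    refine (h6.congr_deriv ?_).hasDerivWithinAt
    ring
  have hint1 : IntervalIntegrable (fun u => (X - u) ^ β * deriv w u) volume A X :=
    intervalIntegrable_rpow_mul (by linarith) hw'
  have hint2 : IntervalIntegrable (fun u => (X - u) ^ (β - 1) * w u) volume A X :=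
    intervalIntegrable_rpow_mul (by linarith) hw.continuous
  have hint : IntervalIntegrable
      (fun u => (-β) * ((X - u) ^ (β - 1) * w u) + (X - u) ^ β * deriv w u) volume A X :=
    (hint2.const_mul (-β)).add hint1
  have hftc := intervalIntegral.integral_eq_sub_of_hasDeriv_right_of_le hAX.le hcont hder hint
  rw [intervalIntegral.integral_add (hint2.const_mul (-β)) hint1,
    intervalIntegral.integral_const_mul] at hftc
  rw [intInt_eq_Ioo hAX.le, intInt_eq_Ioo hAX.le] at hftc
  rw [sub_self, Real.zero_rpow (ne_of_gt hβ), zero_mul] at hftc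
  linarith [hftc]

lemma hasSum_weighted {A X : ℝ} (hAX : A < X) {φ : ℝ → ℝ} (hφ : Continuous φ)
    {c : ℕ → ℝ} (hc : ∀ s : ℝ, 0 ≤ s → Summable fun m => |c m| * s ^ m)
    {S : ℝ → ℝ} (hS : ∀ u : ℝ, HasSum (fun m => c m * (u - X) ^ m) (S u))
    {e : ℝ} (he : (-1 : ℝ) < e) (he' : e ≤ 0) :
    HasSum (fun m : ℕ => c m * (-1 : ℝ) ^ m * ∫ u in Ioo A X, (X - u) ^ (e + m) * φ u)
      (∫ u in Ioo A X, (X - u) ^ e * (S u * φ u)) := by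
  have hXA : (0 : ℝ) < X - A := sub_pos.2 hAX
  set F : ℕ → ℝ → ℝ := fun m u => c m * (-1 : ℝ) ^ m * ((X - u) ^ (e + m) * φ u) with hF
  obtain ⟨M, hM0, hM⟩ : ∃ M : ℝ, 0 ≤ M ∧ ∀ u ∈ Icc A X, |φ u| ≤ M := by
    obtain ⟨M, hM⟩ := (isCompact_Icc (a := A) (b := X)).exists_bound_of_continuousOn
      hφ.continuousOn
    exact ⟨max M 0, le_max_right _ _, fun u hu => (hM u hu).trans (le_max_left _ _)⟩
  have hexp : ∀ m : ℕ, (-1 : ℝ) < e + m := fun m => by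
    have : (0 : ℝ) ≤ m := Nat.cast_nonneg m
    linarith
  have hInt : ∀ m : ℕ, IntegrableOn (F m) (Ioo A X) :=
    fun m => (integrableOn_rpow_mul hAX (hexp m) hφ).const_mul _
  have hIntNorm : Summable fun m => ∫ u in Ioo A X, ‖F m u‖ := by
    rw [← summable_nat_add_iff 1]
    have hsum : Summable fun m : ℕ =>
        (|c (m + 1)| * (X - A) ^ (m + 1)) * ((X - A) ^ e * M * (X - A)) :=
      ((summable_nat_add_iff 1).2 (hc (X - A) hXA.le)).mul_right _
    refine Summable.of_nonneg_of_le
      (fun m => integral_nonneg fun u => norm_nonneg _) (fun m => ?_) hsum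
    have hle : ∀ u ∈ Ioo A X, ‖F (m + 1) u‖ ≤ |c (m + 1)| * ((X - A) ^ e * (X - A) ^ (m + 1)) * M := by
      intro u hu
      have h0u : (0 : ℝ) < X - u := sub_pos.2 hu.2
      have h1 : (X - u) ≤ (X - A) := by linarith [hu.1]
      have hexp0 : (0 : ℝ) ≤ e + (m + 1 : ℕ) := by
        have : (1 : ℝ) ≤ ((m + 1 : ℕ) : ℝ) := by exact_mod_cast Nat.one_le_iff_ne_zero.2 (Nat.succ_ne_zero m)
        linarith
      have h2 : (X - u) ^ (e + (m + 1 : ℕ)) ≤ (X - A) ^ (e + (m + 1 : ℕ)) :=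
        Real.rpow_le_rpow h0u.le h1 hexp0
      have h3 : (X - A) ^ (e + (m + 1 : ℕ)) = (X - A) ^ e * (X - A) ^ (m + 1) := by
        rw [Real.rpow_add hXA, Real.rpow_natCast]
      calc ‖F (m + 1) u‖
          = |c (m + 1)| * ((X - u) ^ (e + (m + 1 : ℕ)) * |φ u|) := by
            rw [hF]
            rw [Real.norm_eq_abs, abs_mul, abs_mul, abs_mul, abs_pow, abs_neg, abs_one,
              one_pow, mul_one, abs_of_nonneg (Real.rpow_nonneg h0u.le _)]
        _ ≤ |c (m + 1)| * ((X - A) ^ (e + (m + 1 : ℕ)) * M) := by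
            apply mul_le_mul_of_nonneg_left _ (abs_nonneg _)
            exact mul_le_mul h2 (hM u (Ioo_subset_Icc_self hu)) (abs_nonneg _)
              (Real.rpow_nonneg hXA.le _)
        _ = |c (m + 1)| * ((X - A) ^ e * (X - A) ^ (m + 1)) * M := by rw [h3]; ring
    calc (∫ u in Ioo A X, ‖F (m + 1) u‖)
        ≤ ∫ _u in Ioo A X, |c (m + 1)| * ((X - A) ^ e * (X - A) ^ (m + 1)) * M := by
          refine setIntegral_mono_on (hInt (m + 1)).norm (integrableOn_const ?_)
            measurableSet_Ioo hle
          rw [Real.volume_Ioo]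
          exact ENNReal.ofReal_ne_top
      _ = |c (m + 1)| * ((X - A) ^ e * (X - A) ^ (m + 1)) * M * (X - A) := by
          rw [setIntegral_const, Real.volume_real_Ioo_of_le hAX.le, smul_eq_mul]
          ring
      _ = |c (m + 1)| * (X - A) ^ (m + 1) * ((X - A) ^ e * M * (X - A)) := by ring
  have key := MeasureTheory.hasSum_integral_of_summable_integral_norm
    (μ := volume.restrict (Ioo A X)) (F := F) hInt hIntNorm
  have h1 : ∀ m : ℕ, (∫ u in Ioo A X, F m u) =
      c m * (-1 : ℝ) ^ m * ∫ u in Ioo A X, (X - u) ^ (e + m) * φ u := fun m =>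
    MeasureTheory.integral_const_mul _ _
  have h2 : (∫ u in Ioo A X, ∑' m, F m u) = ∫ u in Ioo A X, (X - u) ^ e * (S u * φ u) := by
    refine setIntegral_congr_fun measurableSet_Ioo fun u hu => ?_
    have h0u : (0 : ℝ) < X - u := sub_pos.2 hu.2
    have hs2 := (hS u).mul_right ((X - u) ^ e * φ u)
    have hs3 : HasSum (fun m => F m u) (S u * ((X - u) ^ e * φ u)) := by
      refine hs2.congr_fun fun m => ?_
      show c m * (-1 : ℝ) ^ m * ((X - u) ^ (e + (m : ℕ)) * φ u)
        = c m * (u - X) ^ m * ((X - u) ^ e * φ u)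
      have hpow : (u - X) ^ m = (-1 : ℝ) ^ m * (X - u) ^ m := by
        rw [show u - X = -(X - u) by ring, neg_pow]
      have hrp : (X - u) ^ (e + (m : ℕ)) = (X - u) ^ e * (X - u) ^ m := by
        rw [Real.rpow_add h0u, Real.rpow_natCast]
      rw [hpow, hrp]
      ring
    rw [hs3.tsum_eq]
    ring
  rw [h2] at key
  exact key.congr_fun fun m => (h1 m).symm

lemma hasSum_shift {f : ℕ → ℝ} {a : ℝ} (h : HasSum f a) :
    HasSum (fun n => f (n + 1)) (a - f 0) := by
  refine (hasSum_nat_add_iff (f := f) 1).2 ?_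
  rw [Finset.sum_range_one, sub_add_cancel]
  exact h

lemma hasSum_unshift {f : ℕ → ℝ} {a : ℝ} (h : HasSum (fun n => f (n + 1)) a) :
    HasSum f (a + f 0) := by
  have h2 := (hasSum_nat_add_iff (f := f) 1).1 h
  rwa [Finset.sum_range_one] at h2
end LeibnizAux

open MeasureTheory Set intervalIntegral

/-- Leibniz type rule for the Ψ-Caputo fractional derivative. -/
theorem leibniz_psi_Caputo
    (a b : ℝ) (hab : a < b) (α : ℝ) (hα0 : 0 < α) (hα1 : α < 1)
    (Ψ : ℝ → ℝ)
    (hΨmono : StrictMonoOn Ψ (Set.Icc a b))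
    (hΨC1 : ContDiffOn ℝ 1 Ψ (Set.Icc a b))
    (hΨpos : ∀ t ∈ Set.Icc a b, 0 < deriv Ψ t)
    (f g h w : ℝ → ℝ)
    (hf : f = fun t => h (Ψ t)) (hg : g = fun t => w (Ψ t))
    (hh : EntireReal h) (hw : EntireReal w)
    (x : ℝ) (hx : x ∈ Set.Ioo a b) :
    HasSum
      (fun m : ℕ => genBinom α m * iteratedDeriv m h (Ψ x) * psiCD a Ψ g (α - m) x)
      (psiCD a Ψ (fun t => f t * g t) α x -
        g a * (f x - f a) * (Ψ x - Ψ a) ^ (-α) / Real.Gamma (1 - α)) := by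
  subst hf; subst hg
  obtain ⟨hax, hxb⟩ := hx
  show HasSum
    (fun m : ℕ => genBinom α m * iteratedDeriv m h (Ψ x) *
      psiCD a Ψ (fun t => w (Ψ t)) (α - (m : ℝ)) x)
    (psiCD a Ψ (fun t => h (Ψ t) * w (Ψ t)) α x -
      w (Ψ a) * (h (Ψ x) - h (Ψ a)) * (Ψ x - Ψ a) ^ (-α) / Real.Gamma (1 - α))
  have hΓ1pos : 0 < Real.Gamma (1 - α) := Real.Gamma_pos_of_pos (by linarith)
  have hΓ1 : Real.Gamma (1 - α) ≠ 0 := ne_of_gt hΓ1pos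
  have hΨc : ContinuousOn Ψ (Set.Icc a x) :=
    hΨC1.continuousOn.mono (Set.Icc_subset_Icc_right hxb.le)
  have hmono' : StrictMonoOn Ψ (Set.Icc a x) :=
    hΨmono.mono (Set.Icc_subset_Icc_right hxb.le)
  have hAX : Ψ a < Ψ x := hΨmono ⟨le_rfl, hab.le⟩ ⟨hax.le, hxb.le⟩ hax
  have hXA : (0 : ℝ) < Ψ x - Ψ a := sub_pos.2 hAX
  have hder : ∀ t ∈ Set.Ioo a x, HasDerivAt Ψ (deriv Ψ t) t := by
    intro t ht
    have h1 : t ∈ Set.Ioo a b := ⟨ht.1, ht.2.trans hxb⟩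
    exact ((hΨC1.differentiableOn one_ne_zero t (Set.Ioo_subset_Icc_self h1)).differentiableAt
      (Icc_mem_nhds h1.1 h1.2)).hasDerivAt
  have hpos' : ∀ t ∈ Set.Ioo a x, 0 < deriv Ψ t := fun t ht =>
    hΨpos t ⟨ht.1.le, (ht.2.trans hxb).le⟩
  have SUB := LeibnizAux.subst_integral hax hΨc hder hpos' hmono'
  have hhd : Differentiable ℝ h := LeibnizAux.entire_differentiable hh
  have hwd : Differentiable ℝ w := LeibnizAux.entire_differentiable hw
  have hh'e : EntireReal (deriv h) := LeibnizAux.entire_deriv hh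
  have hw'e : EntireReal (deriv w) := LeibnizAux.entire_deriv hw
  have hh'c : Continuous (deriv h) := (LeibnizAux.entire_differentiable hh'e).continuous
  have hw'c : Continuous (deriv w) := (LeibnizAux.entire_differentiable hw'e).continuous
  -- R2 : the Caputo derivative of g of order α
  have R2 : psiCD a Ψ (fun t => w (Ψ t)) α x = (Real.Gamma (1 - α))⁻¹ *
      ∫ u in Set.Ioo (Ψ a) (Ψ x), (Ψ x - u) ^ (-α) * deriv w u := by
    rw [psiCD, if_neg (not_le.2 hα0), psiI, if_neg (by intro hc; linarith [hc] : ¬(1 - α = 0))]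
    congr 1
    rw [LeibnizAux.intInt_eq_Ioo hax.le,
      ← SUB (fun u => (Ψ x - u) ^ (-α) * deriv w u)]
    refine setIntegral_congr_fun measurableSet_Ioo fun t ht => ?_
    have hΨt := hder t ht
    have hne : deriv Ψ t ≠ 0 := ne_of_gt (hpos' t ht)
    have hcw : HasDerivAt (fun s => w (Ψ s)) (deriv w (Ψ t) * deriv Ψ t) t :=
      ((hwd (Ψ t)).hasDerivAt).comp t hΨt
    show deriv Ψ t * (Ψ x - Ψ t) ^ (1 - α - 1) * ((deriv Ψ t)⁻¹ * deriv (fun s => w (Ψ s)) t)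
      = deriv Ψ t * ((Ψ x - Ψ t) ^ (-α) * deriv w (Ψ t))
    rw [hcw.deriv, show (1 - α - 1 : ℝ) = -α by ring]
    field_simp
  -- R1 : the Caputo derivative of f*g of order α
  have R1 : psiCD a Ψ (fun t => h (Ψ t) * w (Ψ t)) α x = (Real.Gamma (1 - α))⁻¹ *
      ((∫ u in Set.Ioo (Ψ a) (Ψ x), (Ψ x - u) ^ (-α) * (deriv h u * w u)) +
       ∫ u in Set.Ioo (Ψ a) (Ψ x), (Ψ x - u) ^ (-α) * (h u * deriv w u)) := by
    rw [psiCD, if_neg (not_le.2 hα0), psiI, if_neg (by intro hc; linarith [hc] : ¬(1 - α = 0))]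
    congr 1
    rw [LeibnizAux.intInt_eq_Ioo hax.le]
    refine (setIntegral_congr_fun measurableSet_Ioo ?_).trans
      ((SUB (fun u => (Ψ x - u) ^ (-α) * (deriv h u * w u) +
          (Ψ x - u) ^ (-α) * (h u * deriv w u))).trans
        (MeasureTheory.integral_add
          (LeibnizAux.integrableOn_rpow_mul hAX (by linarith) (hh'c.mul hwd.continuous))
          (LeibnizAux.integrableOn_rpow_mul hAX (by linarith) (hhd.continuous.mul hw'c))))
    intro t ht
    have hΨt := hder t ht
    have hne : deriv Ψ t ≠ 0 := ne_of_gt (hpos' t ht)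
    have hch : HasDerivAt (fun s => h (Ψ s)) (deriv h (Ψ t) * deriv Ψ t) t :=
      ((hhd (Ψ t)).hasDerivAt).comp t hΨt
    have hcw : HasDerivAt (fun s => w (Ψ s)) (deriv w (Ψ t) * deriv Ψ t) t :=
      ((hwd (Ψ t)).hasDerivAt).comp t hΨt
    have hprod := hch.mul hcw
    show deriv Ψ t * (Ψ x - Ψ t) ^ (1 - α - 1) *
        ((deriv Ψ t)⁻¹ * deriv (fun s => h (Ψ s) * w (Ψ s)) t)
      = deriv Ψ t * ((Ψ x - Ψ t) ^ (-α) * (deriv h (Ψ t) * w (Ψ t)) +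
          (Ψ x - Ψ t) ^ (-α) * (h (Ψ t) * deriv w (Ψ t)))
    rw [show deriv (fun s => h (Ψ s) * w (Ψ s)) t = _ from hprod.deriv, show (1 - α - 1 : ℝ) = -α by ring]
    field_simp
  -- R3 : Caputo derivatives of negative order m - α are fractional integrals
  have R3 : ∀ k : ℕ, psiCD a Ψ (fun t => w (Ψ t)) (α - ((k + 1 : ℕ) : ℝ)) x
      = (Real.Gamma ((k : ℝ) + 1 - α))⁻¹ *
        ∫ u in Set.Ioo (Ψ a) (Ψ x), (Ψ x - u) ^ (-α + (k : ℝ)) * w u := by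
    intro k
    have hk0 : (0 : ℝ) ≤ (k : ℝ) := Nat.cast_nonneg k
    have hcond : α - ((k + 1 : ℕ) : ℝ) ≤ 0 := by push_cast; linarith
    have hordpos : (0 : ℝ) < (k : ℝ) + 1 - α := by linarith
    rw [psiCD, if_pos hcond,
      show -(α - ((k + 1 : ℕ) : ℝ)) = (k : ℝ) + 1 - α by push_cast; ring,
      psiI, if_neg (ne_of_gt hordpos),
      show (k : ℝ) + 1 - α - 1 = -α + (k : ℝ) by ring]
    congr 1
    rw [LeibnizAux.intInt_eq_Ioo hax.le]
    refine (setIntegral_congr_fun measurableSet_Ioo ?_).trans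
      (SUB (fun u => (Ψ x - u) ^ (-α + (k : ℝ)) * w u))
    intro t ht
    show deriv Ψ t * (Ψ x - Ψ t) ^ (-α + (k : ℝ)) * w (Ψ t)
      = deriv Ψ t * ((Ψ x - Ψ t) ^ (-α + (k : ℝ)) * w (Ψ t))
    ring
  -- the two series expansions
  have S1 := LeibnizAux.hasSum_weighted hAX hw'c
    (fun s hs => LeibnizAux.entire_summable hh (Ψ x) hs)
    (LeibnizAux.entire_hasSum hh (Ψ x))
    (by linarith : (-1 : ℝ) < -α) (by linarith : -α ≤ 0)
  have S2 := LeibnizAux.hasSum_weighted hAX hwd.continuous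
    (fun s hs => LeibnizAux.entire_summable hh'e (Ψ x) hs)
    (LeibnizAux.entire_hasSum hh'e (Ψ x))
    (by linarith : (-1 : ℝ) < -α) (by linarith : -α ≤ 0)
  -- S1 : HasSum (fun m => tc h (Ψ x) m * (-1)^m * ∫ (Ψx-u)^(-α+m) * deriv w u)
  --        (∫ (Ψx-u)^(-α) * (h u * deriv w u))
  -- S2 : HasSum (fun m => tc (deriv h) (Ψ x) m * (-1)^m * ∫ (Ψx-u)^(-α+m) * w u)
  --        (∫ (Ψx-u)^(-α) * (deriv h u * w u))
  have hu1 := LeibnizAux.hasSum_shift S1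
  have hA1 := LeibnizAux.hasSum_shift (LeibnizAux.entire_hasSum hh (Ψ x) (Ψ a))
  have hBsum := (hA1.mul_right ((Ψ x - Ψ a) ^ (-α) * w (Ψ a))).neg
  have h3 := (hu1.add S2).sub hBsum
  have h4 := h3.mul_left (Real.Gamma (1 - α))⁻¹
  -- termwise identification
  have HTshift : HasSum
      (fun m : ℕ => genBinom α (m + 1) * iteratedDeriv (m + 1) h (Ψ x) *
        psiCD a Ψ (fun t => w (Ψ t)) (α - ((m + 1 : ℕ) : ℝ)) x)
      ((Real.Gamma (1 - α))⁻¹ *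
        ((∫ u in Set.Ioo (Ψ a) (Ψ x), (Ψ x - u) ^ (-α) * (h u * deriv w u)) -
            LeibnizAux.tc h (Ψ x) 0 * (-1 : ℝ) ^ 0 *
              (∫ u in Set.Ioo (Ψ a) (Ψ x), (Ψ x - u) ^ (-α + ((0 : ℕ) : ℝ)) * deriv w u) +
          (∫ u in Set.Ioo (Ψ a) (Ψ x), (Ψ x - u) ^ (-α) * (deriv h u * w u)) -
          -((h (Ψ a) - LeibnizAux.tc h (Ψ x) 0 * (Ψ a - Ψ x) ^ (0 : ℕ)) *
              ((Ψ x - Ψ a) ^ (-α) * w (Ψ a))))) := by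
    refine h4.congr_fun fun m => ?_
    have hm0 : (0 : ℝ) ≤ (m : ℝ) := Nat.cast_nonneg m
    have hβpos : (0 : ℝ) < -α + ((m + 1 : ℕ) : ℝ) := by push_cast; linarith
    have hP := LeibnizAux.parts (w := w) hAX hwd hw'c hβpos
    rw [show -α + ((m + 1 : ℕ) : ℝ) - 1 = -α + (m : ℝ) by push_cast; ring] at hP
    have hGkpos : (0 : ℝ) < Real.Gamma ((m : ℝ) + 1 - α) :=
      Real.Gamma_pos_of_pos (by linarith)
    have hgbe : genBinom α (m + 1) =
        (-1 : ℝ) ^ m * α / (((m + 1).factorial : ℝ)) / Real.Gamma (1 - α) *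
          Real.Gamma ((m : ℝ) + 1 - α) := by
      have hkc := LeibnizAux.key_coeff hα1 m
      rw [← div_eq_mul_inv] at hkc
      exact (div_eq_iff (ne_of_gt hGkpos)).1 hkc
    show genBinom α (m + 1) * iteratedDeriv (m + 1) h (Ψ x) *
        psiCD a Ψ (fun t => w (Ψ t)) (α - ((m + 1 : ℕ) : ℝ)) x
      = (Real.Gamma (1 - α))⁻¹ *
        (LeibnizAux.tc h (Ψ x) (m + 1) * (-1 : ℝ) ^ (m + 1) *
            (∫ u in Set.Ioo (Ψ a) (Ψ x), (Ψ x - u) ^ (-α + ((m + 1 : ℕ) : ℝ)) * deriv w u) +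
          LeibnizAux.tc (deriv h) (Ψ x) m * (-1 : ℝ) ^ m *
            (∫ u in Set.Ioo (Ψ a) (Ψ x), (Ψ x - u) ^ (-α + (m : ℝ)) * w u) -
          -(LeibnizAux.tc h (Ψ x) (m + 1) * (Ψ a - Ψ x) ^ (m + 1) *
              ((Ψ x - Ψ a) ^ (-α) * w (Ψ a))))
    rw [R3 m, hP, LeibnizAux.tc_deriv,
      show (Ψ x - Ψ a) ^ (-α + ((m + 1 : ℕ) : ℝ))
          = (Ψ x - Ψ a) ^ (-α) * (Ψ x - Ψ a) ^ ((m + 1 : ℕ)) by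
        rw [Real.rpow_add hXA, Real.rpow_natCast],
      show (Ψ a - Ψ x) ^ (m + 1) = (-1 : ℝ) ^ (m + 1) * (Ψ x - Ψ a) ^ (m + 1) by
        rw [show Ψ a - Ψ x = -(Ψ x - Ψ a) by ring, neg_pow],
      hgbe]
    simp only [LeibnizAux.tc]
    have hfac : (((m + 1).factorial : ℝ)) ≠ 0 := Nat.cast_ne_zero.2 (Nat.factorial_ne_zero _)
    push_cast
    field_simp
    ring
  have HT := LeibnizAux.hasSum_unshift
    (f := fun m : ℕ => genBinom α m * iteratedDeriv m h (Ψ x) *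
      psiCD a Ψ (fun t => w (Ψ t)) (α - (m : ℝ)) x) HTshift
  convert HT using 1
  -- final value identification
  have hgb0 : genBinom α 0 = 1 := by simp [genBinom]
  rw [R1]
  simp only [hgb0, LeibnizAux.tc_zero, iteratedDeriv_zero, Nat.cast_zero, sub_zero,
    pow_zero, one_mul, mul_one, add_zero]
  rw [R2]
  field_simp
  ring
end

section
/- (Leibniz type rule for the Caputo–Hadamard derivative.) Let 0 < α < 1 and 0 < a < b. Suppose f = h ∘ ln and g = w ∘ ln on (0,∞) with h, w : ℝ → ℝ real-analytic with everywhere-convergent power series, and write f⁽ᵐ⁾(x) := h⁽ᵐ⁾(ln x) (so f⁽ᵐ⁾ = (x d/dx)^m f). Then for every x ∈ (a,b): (^{CH}D^{α}(f·g))(x) = Σ_{m=0}^∞ binom(α, m) f⁽ᵐ⁾(x) (^{CH}D^{α−m} g)(x) + g(a)(f(x) − f(a)) (ln x − ln a)^{−α} / Γ(1−α), the series converging. -/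
open Real

open MeasureTheory Set intervalIntegral

lemma entire_series {h : ℝ → ℝ} (hh : EntireReal h) (U : ℝ) :
    ∃ q : FormalMultilinearSeries ℝ ℝ ℝ, HasFPowerSeriesOnBall h q U ⊤ := by
  obtain ⟨p, hp⟩ := hh
  have := hp.changeOrigin (y := U) (by simp)
  rw [zero_add] at this
  rw [ENNReal.top_sub_coe] at this
  exact ⟨_, this⟩

lemma entire_contDiff {h : ℝ → ℝ} (hh : EntireReal h) : ContDiff ℝ ⊤ h := by
  refine contDiff_iff_contDiffAt.mpr fun y => ?_
  obtain ⟨q, hq⟩ := entire_series hh y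
  exact hq.analyticAt.contDiffAt

lemma taylor_hasSum {h : ℝ → ℝ} (hh : EntireReal h) (U s : ℝ) :
    HasSum (fun n => ((n.factorial : ℝ))⁻¹ * iteratedDeriv n h U * (s - U) ^ n) (h s) := by
  obtain ⟨q, hq⟩ := entire_series hh U
  have H := hq.hasSum_iteratedFDeriv (y := s - U) (by simp)
  rw [add_sub_cancel] at H
  convert H using 2 with n
  on_goal 1 => rfl
  have : iteratedFDeriv ℝ n h U (fun _ => s - U)
      = (∏ _i : Fin n, (s - U)) • iteratedFDeriv ℝ n h U (fun _ => (1 : ℝ)) := by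
    rw [← ContinuousMultilinearMap.map_smul_univ]
    congr 1; funext i; simp
  rw [this]
  simp [iteratedDeriv, smul_eq_mul, Finset.prod_const]
  ring

lemma taylor_summable {h : ℝ → ℝ} (hh : EntireReal h) (U r : ℝ) (hr : 0 ≤ r) :
    Summable (fun n => |iteratedDeriv n h U| / (n.factorial : ℝ) * r ^ n) := by
  obtain ⟨q, hq⟩ := entire_series hh U
  have S := q.summable_norm_mul_pow (r := r.toNNReal) (lt_of_lt_of_le (by simp) hq.r_le)
  refine S.of_nonneg_of_le (fun n => by positivity) (fun n => ?_)
  have h1 := hq.factorial_smul (1 : ℝ) n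
  have h2 : iteratedDeriv n h U = (n.factorial : ℝ) * q n (fun _ => (1 : ℝ)) := by
    rw [iteratedDeriv]
    rw [← h1]; simp [nsmul_eq_mul]
  have h3 : |iteratedDeriv n h U| / (n.factorial : ℝ) ≤ ‖q n‖ := by
    rw [h2, abs_mul, Nat.abs_cast]
    rw [mul_comm, mul_div_assoc, div_self (by positivity : (n.factorial:ℝ) ≠ 0), mul_one]
    calc |q n (fun _ => (1:ℝ))| ≤ ‖q n‖ * ∏ _i : Fin n, ‖(1:ℝ)‖ := (q n).le_opNorm _
    _ = ‖q n‖ := by simp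
  have hrr : (r.toNNReal : ℝ) = r := Real.coe_toNNReal r hr
  rw [← hrr]
  have : |iteratedDeriv n h U| / (n.factorial : ℝ) * r ^ n ≤ ‖q n‖ * r ^ n := by
    gcongr
  simpa [hrr] using this

lemma gamma_prod {α : ℝ} (hα1 : α < 1) (m : ℕ) :
    Real.Gamma ((m : ℝ) + 1 - α) = (∏ k ∈ Finset.range m, ((k : ℝ) + 1 - α)) * Real.Gamma (1 - α) := by
  induction m with
  | zero => simp
  | succ m ih =>
    have hne : (m : ℝ) + 1 - α ≠ 0 := by
      have : (0:ℝ) ≤ m := Nat.cast_nonneg m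
      nlinarith
    have : ((m + 1 : ℕ) : ℝ) + 1 - α = ((m : ℝ) + 1 - α) + 1 := by push_cast; ring
    rw [this, Real.Gamma_add_one hne, ih, Finset.prod_range_succ]
    ring

lemma coeff_id {α : ℝ} (hα0 : 0 < α) (hα1 : α < 1) (n : ℕ) :
    genBinom α (n + 1) * (Real.Gamma ((n : ℝ) + 1 - α))⁻¹
      = (-1) ^ n * α / (((n + 1).factorial : ℝ) * Real.Gamma (1 - α)) := by
  have hprod : ∏ i ∈ Finset.range (n + 1), (α - (i : ℝ))
      = α * ((-1) ^ n * ∏ k ∈ Finset.range n, ((k : ℝ) + 1 - α)) := by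
    rw [Finset.prod_range_succ']
    simp only [Nat.cast_zero, sub_zero]
    rw [show (∏ i ∈ Finset.range n, (α - ((i : ℕ) + 1 : ℕ))) = ∏ i ∈ Finset.range n, (-(((i:ℝ)) + 1 - α)) from ?_]
    · have : (∏ i ∈ Finset.range n, (-(((i:ℝ)) + 1 - α)))
          = (∏ _i ∈ Finset.range n, (-1:ℝ)) * ∏ i ∈ Finset.range n, (((i:ℝ)) + 1 - α) := by
        rw [← Finset.prod_mul_distrib]
        exact Finset.prod_congr rfl fun i _ => by ring
      rw [this, Finset.prod_const, Finset.card_range]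
      ring
    · refine Finset.prod_congr rfl fun i _ => ?_
      push_cast; ring
  have hΓpos : 0 < Real.Gamma (1 - α) := Real.Gamma_pos_of_pos (by linarith)
  have hppos : ∀ k ∈ Finset.range n, (0:ℝ) < (k : ℝ) + 1 - α := by
    intro k _
    have : (0:ℝ) ≤ k := Nat.cast_nonneg k
    nlinarith
  have hprodpos : 0 < ∏ k ∈ Finset.range n, ((k : ℝ) + 1 - α) := Finset.prod_pos hppos
  rw [genBinom, gamma_prod hα1 n, hprod]
  have hfac : ((n+1).factorial : ℝ) ≠ 0 := by positivity
  field_simp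

lemma II_rpow_mul {A U c : ℝ} (hc : -1 < c) {v : ℝ → ℝ} (hv : ContinuousOn v (uIcc A U)) :
    IntervalIntegrable (fun s => (U - s) ^ c * v s) volume A U := by
  have h0 : IntervalIntegrable (fun y : ℝ => y ^ c) volume 0 (U - A) :=
    intervalIntegral.intervalIntegrable_rpow' hc
  have h1 := (h0.comp_sub_left U).symm
  simp only [sub_zero, sub_sub_cancel] at h1
  exact h1.mul_continuousOn hv

lemma log_subst {a x : ℝ} (ha : 0 < a) (hax : a ≤ x) {G : ℝ → ℝ}
    (hGc : ContinuousOn G (Ioo (Real.log a) (Real.log x)))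
    (hGi : IntervalIntegrable G volume (Real.log a) (Real.log x)) :
    ∫ t in a..x, G (Real.log t) / t = ∫ s in (Real.log a)..(Real.log x), G s := by
  have hxpos : 0 < x := lt_of_lt_of_le ha hax
  have hlog_le : Real.log a ≤ Real.log x := Real.log_le_log ha hax
  have huIcc : uIcc a x = Icc a x := uIcc_of_le hax
  have hpos : ∀ t ∈ Icc a x, 0 < t := fun t ht => lt_of_lt_of_le ha ht.1
  have himg : Real.log '' Icc a x ⊆ Icc (Real.log a) (Real.log x) := by
    rintro _ ⟨t, ht, rfl⟩
    exact ⟨Real.log_le_log ha ht.1, Real.log_le_log (hpos t ht) ht.2⟩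
  have himgIoo : Real.log '' Ioo a x ⊆ Ioo (Real.log a) (Real.log x) := by
    rintro _ ⟨t, ht, rfl⟩
    exact ⟨Real.log_lt_log ha ht.1, Real.log_lt_log (lt_trans ha ht.1) ht.2⟩
  have hGIcc : IntegrableOn G (Icc (Real.log a) (Real.log x)) := by
    rw [integrableOn_Icc_iff_integrableOn_Ioc]
    exact (intervalIntegrable_iff_integrableOn_Ioc_of_le hlog_le).mp hGi
  -- integrability of the substituted integrand
  have hmeas : MeasurableSet (Icc a x) := measurableSet_Icc
  have hderiv : ∀ t ∈ Icc a x, HasDerivWithinAt Real.log t⁻¹ (Icc a x) t := fun t ht =>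
    (Real.hasDerivAt_log (hpos t ht).ne').hasDerivWithinAt
  have hinj : InjOn Real.log (Icc a x) :=
    Real.log_injOn_pos.mono (fun t ht => mem_Ioi.mpr (hpos t ht))
  have hg2 : IntegrableOn (fun t => |t⁻¹| • G (Real.log t)) (Icc a x) := by
    rw [← integrableOn_image_iff_integrableOn_abs_deriv_smul hmeas hderiv hinj G]
    exact hGIcc.mono_set himg
  have hg2' : IntegrableOn (fun t => t⁻¹ • G (Real.log t)) (Icc a x) := by
    refine hg2.congr_fun (fun t ht => ?_) hmeas
    dsimp only
    rw [abs_of_pos (inv_pos.mpr (hpos t ht))]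
  have key : (∫ t in a..x, t⁻¹ • G (Real.log t)) = ∫ s in (Real.log a)..(Real.log x), G s := by
    have := intervalIntegral.integral_comp_smul_deriv''' (f := Real.log)
      (f' := fun t => t⁻¹) (g := G) (a := a) (b := x)
      (Real.continuousOn_log.mono ?_) ?_ ?_ ?_ ?_
    · exact this
    · rw [huIcc]; intro t ht; exact (hpos t ht).ne'
    · rw [min_eq_left hax, max_eq_right hax]
      intro t ht
      exact (Real.hasDerivAt_log (hpos t (Ioo_subset_Icc_self ht)).ne').hasDerivWithinAt
    · rw [min_eq_left hax, max_eq_right hax]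
      exact hGc.mono himgIoo
    · rw [huIcc]
      exact (hGIcc.mono_set himg)
    · rw [huIcc]; exact hg2'
  rw [← key]
  refine intervalIntegral.integral_congr fun t ht => ?_
  rw [smul_eq_mul, div_eq_inv_mul]

lemma hadI_eq {a x : ℝ} (ha : 0 < a) (hax : a ≤ x) {β : ℝ} (hβ : 0 < β) {F v : ℝ → ℝ}
    (hFv : ∀ t ∈ Icc a x, F t = v (Real.log t))
    (hvc : ContinuousOn v (uIcc (Real.log a) (Real.log x))) :
    hadI a β F x
      = (Real.Gamma β)⁻¹ * ∫ s in (Real.log a)..(Real.log x), (Real.log x - s) ^ (β - 1) * v s := by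
  have hlog_le : Real.log a ≤ Real.log x := Real.log_le_log ha hax
  rw [hadI, if_neg hβ.ne']
  congr 1
  have step1 : (∫ t in a..x, (Real.log x - Real.log t) ^ (β - 1) * F t / t)
      = ∫ t in a..x, ((Real.log x - Real.log t) ^ (β - 1) * v (Real.log t)) / t := by
    refine intervalIntegral.integral_congr fun t ht => ?_
    rw [uIcc_of_le hax] at ht
    rw [hFv t ht]
  rw [step1]
  exact log_subst ha hax
    (by
      intro s hs
      refine ContinuousWithinAt.mul ?_ ((hvc.mono ?_) s hs)
      · refine ((Real.continuousAt_rpow_const _ _ (Or.inl ?_)).comp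
          (by fun_prop : Continuous fun s : ℝ => Real.log x - s).continuousAt).continuousWithinAt
        exact sub_ne_zero.mpr (ne_of_gt hs.2)
      · rw [uIcc_of_le hlog_le]; exact Ioo_subset_Icc_self)
    (II_rpow_mul (by linarith) hvc)

/-- Leibniz type rule for the Caputo–Hadamard fractional derivative. -/
theorem leibniz_Caputo_Hadamard
    (a b : ℝ) (ha : 0 < a) (hab : a < b) (α : ℝ) (hα0 : 0 < α) (hα1 : α < 1)
    (f g h w : ℝ → ℝ)
    (hf : ∀ t > (0 : ℝ), f t = h (Real.log t))
    (hg : ∀ t > (0 : ℝ), g t = w (Real.log t))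
    (hh : EntireReal h) (hw : EntireReal w)
    (x : ℝ) (hx : x ∈ Set.Ioo a b) :
    HasSum
      (fun m : ℕ => genBinom α m * iteratedDeriv m h (Real.log x) * chD a (α - m) g x)
      (chD a α (fun t => f t * g t) x -
        g a * (f x - f a) * (Real.log x - Real.log a) ^ (-α) / Real.Gamma (1 - α)) := by
  -- basic setup
  have hax : a ≤ x := hx.1.le
  have hxpos : 0 < x := lt_of_lt_of_le ha hax
  set A := Real.log a with hA
  set U := Real.log x with hU
  have hAU : A < U := Real.log_lt_log ha hx.1
  have hAUle : A ≤ U := hAU.le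
  have hIcc : uIcc A U = Icc A U := uIcc_of_le hAUle
  -- smoothness facts
  have hhsm := entire_contDiff hh
  have hwsm := entire_contDiff hw
  have hhc : Continuous h := hhsm.continuous
  have hwc : Continuous w := hwsm.continuous
  have hhd : Differentiable ℝ h := hhsm.differentiable (by simp)
  have hwd : Differentiable ℝ w := hwsm.differentiable (by simp)
  have hhd' : Continuous (deriv h) := hhsm.continuous_deriv le_top
  have hwd' : Continuous (deriv w) := hwsm.continuous_deriv le_top
  -- dslope
  set d : ℝ → ℝ := dslope h U with hd
  have hdc : Continuous d := by
    rw [continuous_iff_continuousAt]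
    intro s
    rcases eq_or_ne s U with hs | hs
    · rw [hs]; exact continuousAt_dslope_same.mpr (hhd U)
    · exact (continuousAt_dslope_of_ne hs).mpr hhc.continuousAt
  have hdval : ∀ s : ℝ, (s - U) * d s = h s - h U := by
    intro s; simpa [smul_eq_mul] using sub_smul_dslope h U s
  -- derivative identities
  have hgd : ∀ t : ℝ, 0 < t → deriv g t = deriv w (Real.log t) * t⁻¹ := by
    intro t ht
    have hev : g =ᶠ[nhds t] fun u => w (Real.log u) := by
      filter_upwards [IsOpen.mem_nhds isOpen_Ioi ht] with u hu
      exact hg u hu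
    rw [hev.deriv_eq]
    exact (((hwd (Real.log t)).hasDerivAt).comp t (Real.hasDerivAt_log ht.ne')).deriv
  have hfgd : ∀ t : ℝ, 0 < t →
      deriv (fun u => f u * g u) t
        = (deriv h (Real.log t) * t⁻¹) * w (Real.log t)
          + h (Real.log t) * (deriv w (Real.log t) * t⁻¹) := by
    intro t ht
    have hev : (fun u => f u * g u) =ᶠ[nhds t] fun u => h (Real.log u) * w (Real.log u) := by
      filter_upwards [IsOpen.mem_nhds isOpen_Ioi ht] with u hu
      rw [hf u hu, hg u hu]
    rw [hev.deriv_eq]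
    exact ((((hhd _).hasDerivAt).comp t (Real.hasDerivAt_log ht.ne')).mul
      (((hwd _).hasDerivAt).comp t (Real.hasDerivAt_log ht.ne'))).deriv
  -- the three integral representations
  have hα1' : (0:ℝ) < 1 - α := by linarith
  have hexp : (1 - α) - 1 = -α := by ring
  have E1 : chD a α (fun t => f t * g t) x
      = (Real.Gamma (1 - α))⁻¹
        * ∫ s in A..U, (U - s) ^ (-α) * (deriv h s * w s + h s * deriv w s) := by
    rw [chD, if_neg (not_le.mpr hα0)]
    rw [hadI_eq ha hax hα1'
      (v := fun s => deriv h s * w s + h s * deriv w s) ?hFv ?hvc]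
    case hFv =>
      intro t ht
      have htpos : 0 < t := lt_of_lt_of_le ha ht.1
      rw [hfgd t htpos]
      field_simp
    case hvc => fun_prop
    simp only [hexp]
    rfl
  have E2 : chD a α g x
      = (Real.Gamma (1 - α))⁻¹ * ∫ s in A..U, (U - s) ^ (-α) * deriv w s := by
    rw [chD, if_neg (not_le.mpr hα0)]
    rw [hadI_eq ha hax hα1' (v := fun s => deriv w s) ?hFv ?hvc]
    case hFv =>
      intro t ht
      have htpos : 0 < t := lt_of_lt_of_le ha ht.1
      rw [hgd t htpos]
      field_simp
    case hvc => fun_prop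
    simp only [hexp]
    rfl
  have E3 : ∀ n : ℕ, chD a (α - (n + 1 : ℕ)) g x
      = (Real.Gamma ((n : ℝ) + 1 - α))⁻¹ * ∫ s in A..U, (U - s) ^ ((n : ℝ) - α) * w s := by
    intro n
    have hle0 : α - ((n + 1 : ℕ) : ℝ) ≤ 0 := by
      have : (1 : ℝ) ≤ ((n + 1 : ℕ) : ℝ) := by exact_mod_cast Nat.one_le_iff_ne_zero.mpr (Nat.succ_ne_zero n)
      linarith
    rw [chD, if_pos hle0]
    have hneg : -(α - ((n + 1 : ℕ) : ℝ)) = (n : ℝ) + 1 - α := by push_cast; ring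
    rw [hneg]
    have hβ : (0 : ℝ) < (n : ℝ) + 1 - α := by
      have : (0:ℝ) ≤ n := Nat.cast_nonneg n
      linarith
    rw [hadI_eq ha hax hβ (v := w) (fun t ht => hg t (lt_of_lt_of_le ha ht.1)) hwc.continuousOn]
    have hexp2 : (n : ℝ) + 1 - α - 1 = (n : ℝ) - α := by ring
    simp only [hexp2]
    rfl
  -- integration by parts
  set P : ℝ := ∫ s in A..U, (U - s) ^ (-α) * (d s * w s) with hP
  set Q1 : ℝ := ∫ s in A..U, (U - s) ^ (-α) * (deriv h s * w s) with hQ1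
  set Q2 : ℝ := ∫ s in A..U, (U - s) ^ (-α) * (((s - U) * d s) * deriv w s) with hQ2
  set Q2' : ℝ := ∫ s in A..U, (U - s) ^ (-α) * (h s * deriv w s) with hQ2'
  set R : ℝ := ∫ s in A..U, (U - s) ^ (-α) * (deriv w s) with hR
  have hnegne : (-α : ℝ) ≠ 0 := neg_ne_zero.mpr hα0.ne'
  have IBP : -α * P + Q1 + Q2 = (U - A) ^ (-α) * ((h U - h A) * w A) := by
    set G₀ : ℝ → ℝ := fun s => (U - s) ^ (-α) * ((h s - h U) * w s) with hG0
    have hrpow_cont : Continuous fun s : ℝ => (U - s) ^ (1 - α) := by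
      rw [continuous_iff_continuousAt]
      intro s
      exact (Real.continuousAt_rpow_const _ _ (Or.inr hα1'.le)).comp (by fun_prop)
    have heq : ∀ s ∈ Icc A U, G₀ s = -((U - s) ^ (1 - α) * (d s * w s)) := by
      intro s hs
      rcases hs.2.lt_or_eq with hlt | hsU
      · have hUs : 0 < U - s := by linarith
        have e1 : (U - s) ^ (-α) * (U - s) = (U - s) ^ ((1:ℝ) - α) := by
          rw [← Real.rpow_add_one hUs.ne' (-α)]
          congr 1
          ring
        rw [hG0]
        simp only
        rw [← hdval s, ← e1]
        ring
      · rw [hG0]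
        simp only
        rw [hsU, sub_self, Real.zero_rpow hnegne, Real.zero_rpow hα1'.ne']
        ring
    have hcont : ContinuousOn G₀ (Icc A U) := by
      refine ContinuousOn.congr ?_ heq
      exact ((hrpow_cont.mul (hdc.mul hwc)).neg).continuousOn
    have hder : ∀ s ∈ Ioo A U, HasDerivWithinAt G₀
        ((U - s) ^ (-α) * (-α * (d s * w s) + deriv h s * w s + ((s - U) * d s) * deriv w s))
        (Ioi s) s := by
      intro s hs
      have hUs : 0 < U - s := by linarith [hs.2]
      have h0 : HasDerivAt (fun y : ℝ => U - y) (-1) s := (hasDerivAt_id s).const_sub U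
      have h1 : HasDerivAt (fun y : ℝ => (U - y) ^ (-α)) (α * (U - s) ^ (-α - 1)) s := by
        have := h0.rpow_const (p := -α) (Or.inl hUs.ne')
        convert this using 1
        ring
      have h2 : HasDerivAt (fun y => (h y - h U) * w y)
          (deriv h s * w s + (h s - h U) * deriv w s) s :=
        (((hhd s).hasDerivAt).sub_const (h U)).mul ((hwd s).hasDerivAt)
      have h3 := h1.mul h2
      have e1 : (U - s) ^ (-α - 1) * (U - s) = (U - s) ^ (-α) := by
        rw [← Real.rpow_add_one hUs.ne' (-α - 1)]
        congr 1
        ring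
      have h4 : HasDerivAt G₀
          ((U - s) ^ (-α) * (-α * (d s * w s) + deriv h s * w s + ((s - U) * d s) * deriv w s))
          s := by
        convert h3 using 1
        on_goal 1 => rfl
        on_goal 1 => rfl
        on_goal 1 => rfl
        rw [← hdval s, ← e1]
        ring
      exact h4.hasDerivWithinAt
    have hint : IntervalIntegrable
        (fun s => (U - s) ^ (-α)
          * (-α * (d s * w s) + deriv h s * w s + ((s - U) * d s) * deriv w s))
        volume A U := II_rpow_mul (by linarith) (by fun_prop)
    have hFTC := intervalIntegral.integral_eq_sub_of_hasDeriv_right_of_le hAUle hcont hder hint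
    have hGU : G₀ U = 0 := by
      rw [hG0]; simp only
      rw [sub_self, Real.zero_rpow hnegne, zero_mul]
    have hGA : G₀ A = (U - A) ^ (-α) * ((h A - h U) * w A) := rfl
    rw [hGU, hGA, zero_sub] at hFTC
    have hsplit2 : (∫ s in A..U, (U - s) ^ (-α)
          * (-α * (d s * w s) + deriv h s * w s + ((s - U) * d s) * deriv w s))
        = -α * P + Q1 + Q2 := by
      have IP : IntervalIntegrable (fun s => (U - s) ^ (-α) * (d s * w s)) volume A U :=
        II_rpow_mul (by linarith) (by fun_prop)
      have IQ1 : IntervalIntegrable (fun s => (U - s) ^ (-α) * (deriv h s * w s)) volume A U :=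
        II_rpow_mul (by linarith) (by fun_prop)
      have IQ2 : IntervalIntegrable (fun s => (U - s) ^ (-α) * (((s - U) * d s) * deriv w s))
          volume A U := II_rpow_mul (by linarith) (by fun_prop)
      rw [hP, hQ1, hQ2]
      rw [← intervalIntegral.integral_const_mul]
      rw [← intervalIntegral.integral_add (IP.const_mul (-α)) IQ1]
      rw [← intervalIntegral.integral_add ((IP.const_mul (-α)).add IQ1) IQ2]
      refine intervalIntegral.integral_congr fun s _ => ?_
      ring
    rw [hsplit2] at hFTC
    rw [hFTC]
    ring
  have hQ2eq : Q2 = Q2' - h U * R := by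
    rw [hQ2, hQ2', hR]
    rw [← intervalIntegral.integral_const_mul]
    rw [← intervalIntegral.integral_sub
      (II_rpow_mul (c := -α) (by linarith) (by fun_prop))
      ((II_rpow_mul (c := -α) (by linarith) (by fun_prop : ContinuousOn (fun s => deriv w s) (uIcc A U))).const_mul (h U))]
    refine intervalIntegral.integral_congr fun s _ => ?_
    rw [hdval s]
    ring
  -- main HasSum for the series part
  have HS : HasSum
      (fun n : ℕ => (-1 : ℝ) ^ n * (((n + 1).factorial : ℝ))⁻¹ * iteratedDeriv (n + 1) h U
        * ∫ s in A..U, (U - s) ^ ((n : ℝ) - α) * w s) P := by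
    have hUAne : U - A ≠ 0 := sub_ne_zero.mpr hAU.ne'
    have hUApos : 0 < U - A := by linarith
    have hsubne : ∀ n : ℕ, ((n : ℝ) - α) ≠ 0 := by
      intro n
      rcases Nat.eq_zero_or_pos n with rfl | hn
      · simpa using hnegne
      · have : (1 : ℝ) ≤ (n : ℝ) := by exact_mod_cast hn
        have : 0 < (n : ℝ) - α := by linarith
        exact this.ne'
    have hgtm1 : ∀ n : ℕ, (-1 : ℝ) < (n : ℝ) - α := by
      intro n
      have : (0:ℝ) ≤ (n : ℝ) := Nat.cast_nonneg n
      linarith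
    set c1 : ℕ → ℝ := fun n => (-1 : ℝ) ^ n * (((n + 1).factorial : ℝ))⁻¹
      * iteratedDeriv (n + 1) h U with hc1
    set F : ℕ → ℝ → ℝ := fun n s => c1 n * ((U - s) ^ ((n : ℝ) - α) * w s) with hF
    have hFii : ∀ n : ℕ, IntervalIntegrable (F n) volume A U := fun n =>
      (II_rpow_mul (hgtm1 n) hwc.continuousOn).const_mul (c1 n)
    have hFint : ∀ n : ℕ, Integrable (F n) (volume.restrict (Ioc A U)) := fun n =>
      (intervalIntegrable_iff_integrableOn_Ioc_of_le hAUle).mp (hFii n)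
    -- pointwise sums
    have hptw : ∀ s ∈ Ioc A U, HasSum (fun n => F n s) ((U - s) ^ (-α) * (d s * w s)) := by
      intro s hs
      rcases hs.2.lt_or_eq with hlt | hsU
      · have hUs : 0 < U - s := by linarith
        have hsUne : s - U ≠ 0 := sub_ne_zero.mpr hlt.ne
        have T0 := taylor_hasSum hh U s
        have T1 : HasSum (fun n : ℕ =>
            (((n + 1).factorial : ℝ))⁻¹ * iteratedDeriv (n + 1) h U * (s - U) ^ (n + 1))
            (h s - h U) := by
          have := (hasSum_nat_add_iff'
            (f := fun n : ℕ => ((n.factorial : ℝ))⁻¹ * iteratedDeriv n h U * (s - U) ^ n) 1).mpr T0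
          simpa using this
        have T2 := T1.mul_right ((s - U)⁻¹ * ((U - s) ^ (-α) * w s))
        have hterm : ∀ n : ℕ,
            (((n + 1).factorial : ℝ))⁻¹ * iteratedDeriv (n + 1) h U * (s - U) ^ (n + 1)
              * ((s - U)⁻¹ * ((U - s) ^ (-α) * w s)) = F n s := by
          intro n
          have e1 : (s - U) ^ (n + 1) * (s - U)⁻¹ = (s - U) ^ n := by
            rw [pow_succ, mul_assoc, mul_inv_cancel₀ hsUne, mul_one]
          have e2 : (s - U : ℝ) ^ n = (-1 : ℝ) ^ n * (U - s) ^ n := by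
            rw [show (s - U : ℝ) = -(U - s) from by ring, neg_pow]
          have e3 : ((U - s : ℝ) ^ (n : ℕ)) * (U - s) ^ (-α) = (U - s) ^ ((n : ℝ) - α) := by
            rw [← Real.rpow_natCast (U - s) n, ← Real.rpow_add hUs]
            congr 1
          have estep : (((n + 1).factorial : ℝ))⁻¹ * iteratedDeriv (n + 1) h U * (s - U) ^ (n + 1)
              * ((s - U)⁻¹ * ((U - s) ^ (-α) * w s))
              = (((n + 1).factorial : ℝ))⁻¹ * iteratedDeriv (n + 1) h U
                * ((s - U) ^ (n + 1) * (s - U)⁻¹) * ((U - s) ^ (-α) * w s) := by ring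
          rw [estep, e1, e2, hF]
          simp only
          rw [hc1]
          simp only
          rw [← e3]
          ring
        rw [funext hterm] at T2
        convert T2 using 1
        on_goal 1 => rfl
        have hds : d s = (s - U)⁻¹ * (h s - h U) := by
          field_simp
          linear_combination hdval s
        rw [hds]
        ring
      · have hzero : ∀ n : ℕ, F n s = 0 := by
          intro n
          rw [hF]
          simp only
          rw [hsU, sub_self, Real.zero_rpow (hsubne n), zero_mul, mul_zero]
        rw [funext hzero]
        have hval0 : (U - s) ^ (-α) * (d s * w s) = 0 := by
          rw [hsU, sub_self, Real.zero_rpow hnegne, zero_mul]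
        rw [hval0]
        exact hasSum_zero
    -- summability of integral norms
    set C : ℝ := ∫ s in Ioc A U, (U - s) ^ (-α) * |w s| with hC
    have hCint : IntegrableOn (fun s => (U - s) ^ (-α) * |w s|) (Ioc A U) :=
      (intervalIntegrable_iff_integrableOn_Ioc_of_le hAUle).mp
        (II_rpow_mul (by linarith) (hwc.abs.continuousOn))
    have hnormbound : ∀ n : ℕ, (∫ s in Ioc A U, ‖F n s‖)
        ≤ |c1 n| * (U - A) ^ n * C := by
      intro n
      have hint1 : IntegrableOn (fun s => ‖F n s‖) (Ioc A U) := (hFint n).norm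
      have hint2 : IntegrableOn (fun s => |c1 n| * (U - A) ^ n * ((U - s) ^ (-α) * |w s|))
          (Ioc A U) := hCint.const_mul _
      have hle : ∀ s ∈ Ioc A U, ‖F n s‖ ≤ |c1 n| * (U - A) ^ n * ((U - s) ^ (-α) * |w s|) := by
        intro s hs
        rcases hs.2.lt_or_eq with hlt | hsU
        · have hUs : 0 < U - s := by linarith
          have e3 : (U - s) ^ ((n : ℝ) - α) = ((U - s : ℝ) ^ (n : ℕ)) * (U - s) ^ (-α) := by
            rw [← Real.rpow_natCast (U - s) n, ← Real.rpow_add hUs]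
            congr 1
          have hb : (U - s : ℝ) ^ (n : ℕ) ≤ (U - A) ^ n :=
            pow_le_pow_left₀ hUs.le (by linarith [hs.1]) n
          have hnn : (0:ℝ) ≤ (U - s) ^ (-α) := Real.rpow_nonneg hUs.le _
          have habs : ‖F n s‖ = |c1 n| * ((U - s) ^ ((n : ℝ) - α) * |w s|) := by
            rw [hF]
            simp only [Real.norm_eq_abs, abs_mul,
              abs_of_nonneg (Real.rpow_nonneg hUs.le ((n : ℝ) - α))]
            all_goals ring
          calc ‖F n s‖ = |c1 n| * ((U - s) ^ ((n : ℝ) - α) * |w s|) := habs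
            _ = |c1 n| * (((U - s : ℝ) ^ (n : ℕ) * (U - s) ^ (-α)) * |w s|) := by rw [e3]
            _ ≤ |c1 n| * (((U - A : ℝ) ^ (n : ℕ) * (U - s) ^ (-α)) * |w s|) := by
                have := mul_le_mul_of_nonneg_right
                  (mul_le_mul_of_nonneg_right hb hnn) (abs_nonneg (w s))
                exact mul_le_mul_of_nonneg_left this (abs_nonneg _)
            _ = |c1 n| * (U - A) ^ n * ((U - s) ^ (-α) * |w s|) := by ring
        · rw [hF]
          simp only
          rw [hsU, sub_self, Real.zero_rpow (hsubne n), Real.zero_rpow hnegne]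
          simp
      calc (∫ s in Ioc A U, ‖F n s‖)
          ≤ ∫ s in Ioc A U, |c1 n| * (U - A) ^ n * ((U - s) ^ (-α) * |w s|) :=
            setIntegral_mono_on hint1 hint2 measurableSet_Ioc hle
        _ = |c1 n| * (U - A) ^ n * C := by
            rw [hC, MeasureTheory.integral_const_mul]
    have hsummable : Summable (fun n : ℕ => ∫ s in Ioc A U, ‖F n s‖) := by
      have S0 := taylor_summable hh U (U - A) hUApos.le
      have S1 := (summable_nat_add_iff 1).mpr S0
      have S2 := S1.mul_right ((U - A)⁻¹ * C)
      refine Summable.of_nonneg_of_le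
        (fun n => integral_nonneg fun s => norm_nonneg _)
        (fun n => (hnormbound n).trans (le_of_eq ?_)) S2
      rw [hc1]
      simp only
      rw [abs_mul, abs_mul, abs_pow, abs_neg, abs_one, one_pow, one_mul, abs_inv, Nat.abs_cast]
      rw [div_eq_mul_inv]
      field_simp
      ring
    have HSint := MeasureTheory.hasSum_integral_of_summable_integral_norm
      (μ := volume.restrict (Ioc A U)) hFint hsummable
    have htsum : ∀ s ∈ Ioc A U, (∑' n, F n s) = (U - s) ^ (-α) * (d s * w s) :=
      fun s hs => (hptw s hs).tsum_eq
    have hcongr : (∫ s in Ioc A U, (∑' n, F n s))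
        = ∫ s in Ioc A U, (U - s) ^ (-α) * (d s * w s) :=
      MeasureTheory.setIntegral_congr_fun measurableSet_Ioc htsum
    rw [hcongr] at HSint
    have hPioc : P = ∫ s in Ioc A U, (U - s) ^ (-α) * (d s * w s) := by
      rw [hP, intervalIntegral.integral_of_le hAUle]
    have hFn : ∀ n : ℕ, (∫ s in Ioc A U, F n s)
        = (-1 : ℝ) ^ n * (((n + 1).factorial : ℝ))⁻¹ * iteratedDeriv (n + 1) h U
          * ∫ s in A..U, (U - s) ^ ((n : ℝ) - α) * w s := by
      intro n
      rw [show (∫ s in Ioc A U, F n s) = ∫ s in A..U, F n s from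
        (intervalIntegral.integral_of_le hAUle).symm]
      rw [hF]
      simp only
      rw [intervalIntegral.integral_const_mul, hc1]
    rw [hPioc]
    simp only [hFn] at HSint
    exact HSint
  -- assemble
  rw [← hasSum_nat_add_iff' 1]
  have hga : g a = w A := hg a ha
  have hfx : f x = h U := hf x hxpos
  have hfa : f a = h A := hf a ha
  have hgb0 : genBinom α 0 = 1 := by simp [genBinom]
  have hsum0 : ∑ i ∈ Finset.range 1, genBinom α i * iteratedDeriv i h U * chD a (α - i) g x
      = h U * ((Real.Gamma (1 - α))⁻¹ * R) := by
    rw [Finset.sum_range_one, hgb0]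
    simp only [Nat.cast_zero, sub_zero, iteratedDeriv_zero]
    rw [E2]; ring
  rw [hsum0]
  have hval : chD a α (fun t => f t * g t) x -
        g a * (f x - f a) * (U - A) ^ (-α) / Real.Gamma (1 - α)
        - h U * ((Real.Gamma (1 - α))⁻¹ * R)
      = α * (Real.Gamma (1 - α))⁻¹ * P := by
    have hsplit : (∫ s in A..U, (U - s) ^ (-α) * (deriv h s * w s + h s * deriv w s))
        = Q1 + Q2' := by
      rw [hQ1, hQ2']
      rw [← intervalIntegral.integral_add
        (II_rpow_mul (by linarith) (by fun_prop) )
        (II_rpow_mul (by linarith) (by fun_prop))]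
      exact intervalIntegral.integral_congr fun s _ => by ring
    rw [E1, hsplit, hga, hfx, hfa]
    have : Q1 + Q2 = (U - A) ^ (-α) * ((h U - h A) * w A) + α * P := by linarith [IBP]
    rw [hQ2eq] at this
    rw [div_eq_mul_inv]
    linear_combination (Real.Gamma (1 - α))⁻¹ * this
  rw [hval]
  have term_eq : ∀ n : ℕ,
      genBinom α (n + 1) * iteratedDeriv (n + 1) h U * chD a (α - ((n + 1 : ℕ) : ℝ)) g x
      = (α * (Real.Gamma (1 - α))⁻¹)
        * ((-1 : ℝ) ^ n * (((n + 1).factorial : ℝ))⁻¹ * iteratedDeriv (n + 1) h U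
          * ∫ s in A..U, (U - s) ^ ((n : ℝ) - α) * w s) := by
    intro n
    rw [E3 n]
    have := coeff_id hα0 hα1 n
    have hrw : genBinom α (n + 1) * (Real.Gamma ((n : ℝ) + 1 - α))⁻¹
        = (-1) ^ n * α / (((n + 1).factorial : ℝ) * Real.Gamma (1 - α)) := this
    rw [div_eq_mul_inv, mul_inv] at hrw
    linear_combination (iteratedDeriv (n + 1) h U * (∫ s in A..U, (U - s) ^ ((n : ℝ) - α) * w s)) * hrw
  have hfun : (fun n : ℕ => genBinom α (n + 1) * iteratedDeriv (n + 1) h U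
        * chD a (α - ((n + 1 : ℕ) : ℝ)) g x)
      = fun n : ℕ => (α * (Real.Gamma (1 - α))⁻¹)
        * ((-1 : ℝ) ^ n * (((n + 1).factorial : ℝ))⁻¹ * iteratedDeriv (n + 1) h U
          * ∫ s in A..U, (U - s) ^ ((n : ℝ) - α) * w s) := funext term_eq
  rw [hfun]
  exact HS.mul_left _
end

section
/- (Leibniz type rule for the Caputo–Katugampola derivative.) Let 0 < α < 1, ρ > 0, 0 < a < b, and take Ψ(x) := x^ρ. Suppose f = h ∘ Ψ and g = w ∘ Ψ with h, w : ℝ → ℝ real-analytic with everywhere-convergent power series, and write f⁽ᵐ⁾(x) := h⁽ᵐ⁾(x^ρ). Then for every x ∈ (a,b): (^{C}D^{α;Ψ}(f·g))(x) = Σ_{m=0}^∞ binom(α, m) f⁽ᵐ⁾(x) (^{C}D^{α−m;Ψ} g)(x) + g(a)(f(x) − f(a)) (x^ρ − a^ρ)^{−α} / Γ(1−α), the series converging. -/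
open Real

section LeibnizHelpers
open MeasureTheory Set intervalIntegral


namespace EntireReal

lemma ball {h : ℝ → ℝ} (hh : EntireReal h) (X : ℝ) :
    ∃ q : FormalMultilinearSeries ℝ ℝ ℝ, HasFPowerSeriesOnBall h q X ⊤ := by
  obtain ⟨p, hp⟩ := hh
  have := hp.changeOrigin (y := X) (by simp)
  simp only [zero_add] at this
  exact ⟨_, by simpa using this⟩

lemma differentiable {h : ℝ → ℝ} (hh : EntireReal h) : Differentiable ℝ h := by
  obtain ⟨p, hp⟩ := hh
  intro y
  have hy : y ∈ Metric.eball (0:ℝ) ⊤ := by simp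
  exact ((hp.analyticOnNhd y hy).differentiableAt)

lemma deriv_entire {h : ℝ → ℝ} (hh : EntireReal h) : EntireReal (deriv h) := by
  obtain ⟨p, hp⟩ := hh
  have hd := hp.fderiv
  have H := (ContinuousLinearMap.apply ℝ ℝ (1:ℝ)).comp_hasFPowerSeriesOnBall hd
  refine ⟨(ContinuousLinearMap.apply ℝ ℝ (1:ℝ)).compFormalMultilinearSeries p.derivSeries, ?_⟩
  have heq : deriv h = (ContinuousLinearMap.apply ℝ ℝ (1:ℝ)) ∘ (fderiv ℝ h) := by
    ext y
    simp [Function.comp]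
  rw [heq]
  exact H

lemma hasSum_taylor {h : ℝ → ℝ} (hh : EntireReal h) (X u : ℝ) :
    HasSum (fun n : ℕ => ((n.factorial : ℝ))⁻¹ * iteratedDeriv n h X * (u - X) ^ n) (h u) := by
  obtain ⟨q, hq⟩ := hh.ball X
  have H := hq.hasSum_iteratedFDeriv (y := u - X) (by simp)
  simp only [add_sub_cancel] at H
  convert H using 2 with n
  · rfl
  have := ((iteratedFDeriv ℝ n h X).map_smul_univ (fun _ : Fin n => u - X) (fun _ => (1:ℝ)))
  simp only [smul_eq_mul, mul_one, Finset.prod_const, Finset.card_fin] at this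
  rw [iteratedDeriv_eq_iteratedFDeriv, smul_eq_mul, this]
  ring

lemma summable_taylor {h : ℝ → ℝ} (hh : EntireReal h) (X : ℝ) {R : ℝ} (hR : 0 ≤ R) :
    Summable (fun n : ℕ => |iteratedDeriv n h X| / (n.factorial : ℝ) * R ^ n) := by
  obtain ⟨q, hq⟩ := hh.ball X
  lift R to NNReal using hR
  have hrad : (R : ENNReal) < q.radius := lt_of_lt_of_le (by simp) hq.r_le
  have hs := q.summable_norm_mul_pow hrad
  refine hs.of_nonneg_of_le (fun n => by positivity) (fun n => ?_)
  have hfac := hq.factorial_smul (y := (1:ℝ)) n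
  have h1 : iteratedDeriv n h X = (n.factorial : ℝ) * q n (fun _ => (1:ℝ)) := by
    rw [iteratedDeriv_eq_iteratedFDeriv, ← hfac]; simp [nsmul_eq_mul]
  rw [h1]
  have h2 : |(n.factorial : ℝ) * q n (fun _ => (1:ℝ))| / (n.factorial : ℝ)
      = |q n (fun _ => (1:ℝ))| := by
    rw [abs_mul, abs_of_nonneg (by positivity)]
    field_simp
  rw [h2]
  gcongr
  calc |q n (fun _ => (1:ℝ))| = ‖q n (fun _ => (1:ℝ))‖ := rfl
    _ ≤ ‖q n‖ * ∏ _i : Fin n, ‖(1:ℝ)‖ := (q n).le_opNorm _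
    _ = ‖q n‖ := by simp

end EntireReal


lemma Gamma_prod {α : ℝ} (hα1 : α < 1) (m : ℕ) :
    Real.Gamma ((m:ℝ) + 1 - α) = Real.Gamma (1 - α) * ∏ i ∈ Finset.range m, ((i:ℝ) + 1 - α) := by
  induction m with
  | zero => simp
  | succ n ih =>
    have h1 : ((n:ℝ) + 1 - α) ≠ 0 := by
      have : α < (n:ℝ) + 1 := lt_of_lt_of_le hα1 (by exact_mod_cast le_add_of_nonneg_left (Nat.cast_nonneg n))
      linarith
    have h2 : ((n+1:ℕ):ℝ) + 1 - α = ((n:ℝ) + 1 - α) + 1 := by push_cast; ring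
    rw [h2, Real.Gamma_add_one h1, ih, Finset.prod_range_succ]
    ring

lemma GB {α : ℝ} (hα1 : α < 1) (n : ℕ) :
    Real.Gamma (1-α) * (genBinom α (n+1) * ((n+1).factorial : ℝ)) =
      (-1:ℝ)^n * α * Real.Gamma ((n:ℝ) + 1 - α) := by
  have hfac : ((n+1).factorial : ℝ) ≠ 0 := by positivity
  have h1 : genBinom α (n+1) * ((n+1).factorial : ℝ) = ∏ i ∈ Finset.range (n+1), (α - (i:ℝ)) := by
    rw [genBinom]; field_simp
  have h2 : ∏ i ∈ Finset.range (n+1), (α - (i:ℝ))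
      = (∏ i ∈ Finset.range n, (α - ((i:ℝ)+1))) * α := by
    rw [Finset.prod_range_succ']
    simp only [Nat.cast_zero, sub_zero]
    congr 1
    exact Finset.prod_congr rfl (fun i _ => by push_cast; ring)
  have h3 : ∏ i ∈ Finset.range n, (α - ((i:ℝ)+1))
      = (-1:ℝ)^n * ∏ i ∈ Finset.range n, ((i:ℝ) + 1 - α) := by
    rw [show ((-1:ℝ)^n) = ∏ _i ∈ Finset.range n, (-1:ℝ) from by simp, ← Finset.prod_mul_distrib]
    exact Finset.prod_congr rfl (fun i _ => by ring)
  rw [h1, h2, h3, Gamma_prod hα1 n]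
  ring

section Core

variable {a x ρ : ℝ}

lemma derivP (hρ : 0 < ρ) {t : ℝ} (ht : 0 < t) :
    deriv (fun s : ℝ => s ^ ρ) t = ρ * t ^ (ρ - 1) :=
  Real.deriv_rpow_const t ρ

lemma image_P (ha : 0 < a) (hax : a < x) (hρ : 0 < ρ) :
    (fun t : ℝ => t ^ ρ) '' Set.Ioo a x = Set.Ioo (a ^ ρ) (x ^ ρ) := by
  have hc : ContinuousOn (fun t : ℝ => t ^ ρ) (Icc a x) := by
    apply ContinuousOn.rpow_const continuousOn_id
    intro t ht
    exact Or.inl (ne_of_gt (lt_of_lt_of_le ha ht.1))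
  apply Subset.antisymm
  · rintro _ ⟨t, ht, rfl⟩
    exact ⟨Real.rpow_lt_rpow ha.le ht.1 hρ, Real.rpow_lt_rpow (ha.trans ht.1).le ht.2 hρ⟩
  · exact intermediate_value_Ioo hax.le hc

lemma sub_integral (ha : 0 < a) (hax : a < x) (hρ : 0 < ρ) (φ : ℝ → ℝ) :
    ∫ t in Set.Ioo a x, deriv (fun s : ℝ => s ^ ρ) t * φ (t ^ ρ) =
      ∫ u in Set.Ioo (a ^ ρ) (x ^ ρ), φ u := by
  rw [← image_P ha hax hρ]
  rw [integral_image_eq_integral_abs_deriv_smul measurableSet_Ioo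
      (f' := fun t => ρ * t ^ (ρ - 1))
      (fun t ht => (Real.hasDerivAt_rpow_const
        (Or.inl (ne_of_gt (ha.trans ht.1)))).hasDerivWithinAt)
      (fun s hs t ht hst => by
        have h1 : (0:ℝ) < s := ha.trans hs.1
        have h2 : (0:ℝ) < t := ha.trans ht.1
        have := Real.rpow_left_injOn (x := ρ) hρ.ne'
        exact this (le_of_lt h1) (le_of_lt h2) (by simpa using hst)) φ]
  apply setIntegral_congr_fun measurableSet_Ioo
  intro t ht
  have h0 : (0:ℝ) < t := ha.trans ht.1
  simp only [smul_eq_mul]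
  rw [derivP hρ h0, abs_of_pos (by positivity)]

lemma int_rpow {β A X : ℝ} (hβ : -1 < β) : IntegrableOn (fun u => (X - u) ^ β) (Set.Ioo A X) := by
  have h1 : IntervalIntegrable (fun s : ℝ => s ^ β) volume 0 (X - A) :=
    intervalIntegrable_rpow' hβ
  have h2 := h1.comp_sub_left X
  simp only [sub_zero, sub_sub_cancel] at h2
  rcases le_total A X with hAX | hAX
  · exact (intervalIntegrable_iff_integrableOn_Ioo_of_le hAX).mp h2.symm
  · rw [Set.Ioo_eq_empty (by simpa using hAX : ¬ A < X)]
    simp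

lemma cont_rpow_Ioo {β A X : ℝ} : ContinuousOn (fun u : ℝ => (X - u) ^ β) (Set.Ioo A X) := by
  apply ContinuousOn.rpow_const (by fun_prop)
  intro u hu
  exact Or.inl (ne_of_gt (sub_pos.2 hu.2))

lemma int_rpow_mul {β A X : ℝ} (hβ : -1 < β) {Λ : ℝ → ℝ} (hΛ : ContinuousOn Λ (Icc A X)) :
    IntegrableOn (fun u => (X - u) ^ β * Λ u) (Set.Ioo A X) := by
  rcases le_or_gt X A with hXA | hAX
  · rw [Set.Ioo_eq_empty (by simpa using hXA : ¬ A < X)]; simp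
  obtain ⟨C, hC⟩ := (isCompact_Icc (a := A) (b := X)).exists_bound_of_continuousOn hΛ
  apply Integrable.mono' ((int_rpow hβ (A := A) (X := X)).mul_const C)
  · exact ((cont_rpow_Ioo.mul (hΛ.mono Set.Ioo_subset_Icc_self)).aestronglyMeasurable
      measurableSet_Ioo)
  · rw [ae_restrict_iff' measurableSet_Ioo]
    filter_upwards with u hu
    have h1 : (0:ℝ) ≤ (X - u) ^ β := Real.rpow_nonneg (sub_pos.2 hu.2).le (β)
    rw [Real.norm_eq_abs, abs_mul, abs_of_nonneg h1]
    exact mul_le_mul_of_nonneg_left (le_trans (le_abs_self _ |>.trans (le_refl _))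
      (by simpa using hC u (Set.Ioo_subset_Icc_self hu))) h1

lemma ftc_w {A X β : ℝ} (hAX : A < X) (hβ : 0 < β) {w : ℝ → ℝ}
    (hw : Differentiable ℝ w) (hw' : Continuous (deriv w)) :
    ∫ u in Set.Ioo A X, (X - u) ^ β * deriv w u
      = -((X - A) ^ β * w A) + β * ∫ u in Set.Ioo A X, (X - u) ^ (β - 1) * w u := by
  set f' : ℝ → ℝ := fun u => (X - u) ^ β * deriv w u - β * ((X - u) ^ (β - 1) * w u) with hf'
  have hint1 : IntegrableOn (fun u => (X - u) ^ β * deriv w u) (Set.Ioo A X) :=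
    int_rpow_mul (by linarith) hw'.continuousOn
  have hint2 : IntegrableOn (fun u => (X - u) ^ (β - 1) * w u) (Set.Ioo A X) :=
    int_rpow_mul (by linarith) hw.continuous.continuousOn
  have hintf' : IntegrableOn f' (Set.Ioo A X) := hint1.sub (hint2.const_mul β)
  have hftc : ∫ u in A..X, f' u = 0 - (X - A) ^ β * w A := by
    rw [integral_eq_sub_of_hasDeriv_right_of_le hAX.le
      (f := fun u => (X - u) ^ β * w u)
      (by
        apply ContinuousOn.mul _ hw.continuous.continuousOn
        apply ContinuousOn.rpow_const (by fun_prop)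
        exact fun u hu => Or.inr hβ.le)
      (fun u hu => by
        have h1 : HasDerivAt (fun u : ℝ => X - u) (-1) u := (hasDerivAt_id u).const_sub X
        have h2 : HasDerivAt (fun y : ℝ => y ^ β) (β * (X - u) ^ (β - 1)) (X - u) :=
          Real.hasDerivAt_rpow_const (Or.inl (ne_of_gt (sub_pos.2 hu.2)))
        have h3 := (h2.comp u h1).mul (hw u).hasDerivAt
        apply HasDerivAt.hasDerivWithinAt
        convert h3 using 1
        · rfl
        · rfl
        simp [hf']
        ring)
      (by
        rw [intervalIntegrable_iff_integrableOn_Ioo_of_le hAX.le]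
        exact hintf')]
    rw [sub_self, Real.zero_rpow hβ.ne']
    ring
  rw [integral_of_le hAX.le, integral_Ioc_eq_integral_Ioo] at hftc
  have hsplit : ∫ u in Set.Ioo A X, f' u =
      (∫ u in Set.Ioo A X, (X - u) ^ β * deriv w u)
        - β * ∫ u in Set.Ioo A X, (X - u) ^ (β - 1) * w u := by
    rw [integral_sub hint1 (hint2.const_mul β), MeasureTheory.integral_const_mul]
  rw [hsplit] at hftc
  linarith

end Core
end LeibnizHelpers

open MeasureTheory intervalIntegral in
/-- Leibniz type rule for the Caputo–Katugampola fractional derivative,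
i.e. the Ψ-Caputo derivative with `Ψ(x) = x^ρ`. -/
theorem leibniz_Caputo_Katugampola
    (a b ρ : ℝ) (ha : 0 < a) (hab : a < b) (hρ : 0 < ρ)
    (α : ℝ) (hα0 : 0 < α) (hα1 : α < 1)
    (f g h w : ℝ → ℝ)
    (hf : f = fun t => h (t ^ ρ)) (hg : g = fun t => w (t ^ ρ))
    (hh : EntireReal h) (hw : EntireReal w)
    (x : ℝ) (hx : x ∈ Set.Ioo a b) :
    HasSum
      (fun m : ℕ => genBinom α m * iteratedDeriv m h (x ^ ρ) *
        psiCD a (fun t => t ^ ρ) g (α - m) x)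
      (psiCD a (fun t => t ^ ρ) (fun t => f t * g t) α x -
        g a * (f x - f a) * (x ^ ρ - a ^ ρ) ^ (-α) / Real.Gamma (1 - α)) := by
  subst hf hg
  obtain ⟨hax, hxb⟩ := hx
  have h0x : 0 < x := ha.trans hax
  have h1α : (0:ℝ) < 1 - α := by linarith
  have hΓ : (0:ℝ) < Real.Gamma (1 - α) := Real.Gamma_pos_of_pos h1α
  have hΓne : Real.Gamma (1 - α) ≠ 0 := hΓ.ne'
  have hAX : a ^ ρ < x ^ ρ := Real.rpow_lt_rpow ha.le hax hρ
  have hR : (0:ℝ) < x ^ ρ - a ^ ρ := sub_pos.2 hAX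
  set J : Set ℝ := Set.Ioo (a ^ ρ) (x ^ ρ) with hJdef
  -- differentiability of the entire functions
  have hhd : Differentiable ℝ h := hh.differentiable
  have hwd : Differentiable ℝ w := hw.differentiable
  have hh' : EntireReal (deriv h) := hh.deriv_entire
  have hw'd : Differentiable ℝ (deriv w) := hw.deriv_entire.differentiable
  have hexp : ∀ m : ℕ, (-1:ℝ) < (m:ℝ) - α := fun m => by
    have : (0:ℝ) ≤ m := Nat.cast_nonneg m
    linarith
  -- merging powers
  have hmerge : ∀ u : ℝ, u < x ^ ρ → ∀ m : ℕ,
      (u - x ^ ρ) ^ m * (x ^ ρ - u) ^ (-α) = (-1:ℝ) ^ m * (x ^ ρ - u) ^ ((m:ℝ) - α) := by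
    intro u hu m
    have h1 : (0:ℝ) < x ^ ρ - u := sub_pos.2 hu
    have h2 : (u - x ^ ρ) ^ m = (-1:ℝ) ^ m * (x ^ ρ - u) ^ m := by
      rw [show u - x ^ ρ = -(x ^ ρ - u) by ring, neg_pow]
    rw [h2, mul_assoc]
    congr 1
    rw [← Real.rpow_natCast (x ^ ρ - u) m, ← Real.rpow_add h1]
    congr 1
  -- substitution lemma, interval-integral form
  have convI : ∀ (γ : ℝ) (Λ : ℝ → ℝ),
      (∫ t in a..x, deriv (fun s : ℝ => s ^ ρ) t * (x ^ ρ - t ^ ρ) ^ γ * Λ (t ^ ρ))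
        = ∫ u in J, (x ^ ρ - u) ^ γ * Λ u := by
    intro γ Λ
    rw [integral_of_le hax.le, MeasureTheory.integral_Ioc_eq_integral_Ioo, hJdef,
      ← sub_integral ha hax hρ (fun u => (x ^ ρ - u) ^ γ * Λ u)]
    exact MeasureTheory.setIntegral_congr_fun measurableSet_Ioo (fun t ht => by ring)
  -- the ψ-Caputo derivative of a composite, in u-space
  have convCD : ∀ Λ : ℝ → ℝ, Differentiable ℝ Λ →
      psiCD a (fun t => t ^ ρ) (fun t => Λ (t ^ ρ)) α x
        = (Real.Gamma (1 - α))⁻¹ * ∫ u in J, (x ^ ρ - u) ^ (-α) * deriv Λ u := by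
    intro Λ hΛ
    rw [psiCD, if_neg (not_le.2 hα0), psiI, if_neg (by linarith : (1:ℝ) - α ≠ 0)]
    rw [← convI (-α) (deriv Λ)]
    congr 1
    rw [integral_of_le hax.le, integral_of_le hax.le,
      MeasureTheory.integral_Ioc_eq_integral_Ioo, MeasureTheory.integral_Ioc_eq_integral_Ioo]
    apply MeasureTheory.setIntegral_congr_fun measurableSet_Ioo
    intro t ht
    have h0t : 0 < t := ha.trans ht.1
    have hPd : HasDerivAt (fun s : ℝ => s ^ ρ) (ρ * t ^ (ρ - 1)) t :=
      Real.hasDerivAt_rpow_const (Or.inl h0t.ne')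
    have hdP : deriv (fun s : ℝ => s ^ ρ) t = ρ * t ^ (ρ - 1) := derivP hρ h0t
    have hPne : ρ * t ^ (ρ - 1) ≠ 0 := by positivity
    have hcomp : HasDerivAt (fun s : ℝ => Λ (s ^ ρ))
        (deriv Λ (t ^ ρ) * (ρ * t ^ (ρ - 1))) t :=
      (hΛ (t ^ ρ)).hasDerivAt.comp t hPd
    simp only
    rw [hcomp.deriv, hdP, show (1 - α - 1 : ℝ) = -α by ring]
    field_simp
  -- the three main conversions
  have eqFG : psiCD a (fun t => t ^ ρ) (fun t => h (t ^ ρ) * w (t ^ ρ)) α x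
      = (Real.Gamma (1 - α))⁻¹ *
        ∫ u in J, (x ^ ρ - u) ^ (-α) * (deriv h u * w u + h u * deriv w u) := by
    rw [convCD (fun u => h u * w u) (hhd.mul hwd)]
    congr 1
    apply MeasureTheory.setIntegral_congr_fun measurableSet_Ioo
    intro u hu
    beta_reduce
    rw [deriv_fun_mul (hhd u) (hwd u)]
  have eqD0 : psiCD a (fun t => t ^ ρ) (fun t => w (t ^ ρ)) α x
      = (Real.Gamma (1 - α))⁻¹ * ∫ u in J, (x ^ ρ - u) ^ (-α) * deriv w u :=
    convCD w hwd
  have eqD : ∀ n : ℕ, psiCD a (fun t => t ^ ρ) (fun t => w (t ^ ρ)) (α - (n + 1 : ℕ)) x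
      = (Real.Gamma ((n:ℝ) + 1 - α))⁻¹ * ∫ u in J, (x ^ ρ - u) ^ ((n:ℝ) - α) * w u := by
    intro n
    have hcast : ((n + 1 : ℕ) : ℝ) = (n:ℝ) + 1 := by push_cast; ring
    have hle : α - ((n + 1 : ℕ) : ℝ) ≤ 0 := by rw [hcast]; nlinarith [(Nat.cast_nonneg n : (0:ℝ) ≤ (n:ℝ))]
    have hpos : (0:ℝ) < (n:ℝ) + 1 - α := by nlinarith [(Nat.cast_nonneg n : (0:ℝ) ≤ (n:ℝ))]
    rw [psiCD, if_pos hle, psiI, if_neg (by rw [hcast]; linarith)]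
    rw [show -(α - ((n + 1 : ℕ) : ℝ)) = (n:ℝ) + 1 - α by rw [hcast]; ring]
    rw [show ((n:ℝ) + 1 - α - 1) = (n:ℝ) - α by ring]
    rw [convI ((n:ℝ) - α) w]
  -- the summation-integral exchange
  have exchange : ∀ (d : ℕ → ℝ) (Λ S : ℝ → ℝ), Continuous Λ →
      Summable (fun m => |d m| * (x ^ ρ - a ^ ρ) ^ m) →
      (∀ u : ℝ, HasSum (fun m => d m * (u - x ^ ρ) ^ m) (S u)) →
      HasSum (fun m => ∫ u in J, d m * (u - x ^ ρ) ^ m * ((x ^ ρ - u) ^ (-α) * Λ u))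
        (∫ u in J, S u * ((x ^ ρ - u) ^ (-α) * Λ u)) := by
    intro d Λ S hΛc hsum hpt
    obtain ⟨C, hC⟩ := (isCompact_Icc (a := a ^ ρ) (b := x ^ ρ)).exists_bound_of_continuousOn
      hΛc.continuousOn
    have hC0 : 0 ≤ C := le_trans (norm_nonneg _) (hC (a ^ ρ) (Set.left_mem_Icc.2 hAX.le))
    set K : ℝ := ∫ u in J, (x ^ ρ - u) ^ (-α) with hK
    have hK0 : 0 ≤ K := MeasureTheory.setIntegral_nonneg measurableSet_Ioo
      (fun u hu => Real.rpow_nonneg (sub_pos.2 hu.2).le _)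
    have hKint : MeasureTheory.IntegrableOn (fun u => (x ^ ρ - u) ^ (-α)) J :=
      int_rpow (by linarith)
    have hFi : ∀ m : ℕ, MeasureTheory.IntegrableOn
        (fun u => d m * (u - x ^ ρ) ^ m * ((x ^ ρ - u) ^ (-α) * Λ u)) J := by
      intro m
      have base : MeasureTheory.IntegrableOn
          (fun u => (x ^ ρ - u) ^ ((m:ℝ) - α) * Λ u) J :=
        int_rpow_mul (hexp m) hΛc.continuousOn
      apply MeasureTheory.IntegrableOn.congr_fun ((base.const_mul (d m * (-1:ℝ) ^ m)))
        _ measurableSet_Ioo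
      intro u hu
      have := hmerge u hu.2 m
      simp only
      calc d m * (-1:ℝ) ^ m * ((x ^ ρ - u) ^ ((m:ℝ) - α) * Λ u)
          = d m * ((-1:ℝ) ^ m * (x ^ ρ - u) ^ ((m:ℝ) - α)) * Λ u := by ring
        _ = d m * ((u - x ^ ρ) ^ m * (x ^ ρ - u) ^ (-α)) * Λ u := by rw [← this]
        _ = d m * (u - x ^ ρ) ^ m * ((x ^ ρ - u) ^ (-α) * Λ u) := by ring
    have hFnorm : Summable (fun m => ∫ u in J,
        ‖d m * (u - x ^ ρ) ^ m * ((x ^ ρ - u) ^ (-α) * Λ u)‖) := by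
      apply Summable.of_nonneg_of_le
        (fun m => MeasureTheory.integral_nonneg (fun u => norm_nonneg _))
        (fun m => ?_) (hsum.mul_right (C * K))
      have hb : ∀ u ∈ J, ‖d m * (u - x ^ ρ) ^ m * ((x ^ ρ - u) ^ (-α) * Λ u)‖
          ≤ (|d m| * (x ^ ρ - a ^ ρ) ^ m * C) * (x ^ ρ - u) ^ (-α) := by
        intro u hu
        have h1 : (0:ℝ) < x ^ ρ - u := sub_pos.2 hu.2
        have h2 : (0:ℝ) ≤ (x ^ ρ - u) ^ (-α) := Real.rpow_nonneg h1.le _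
        have h3 : |u - x ^ ρ| ^ m ≤ (x ^ ρ - a ^ ρ) ^ m := by
          apply pow_le_pow_left₀ (abs_nonneg _)
          rw [abs_of_neg (by linarith)]
          simp only [neg_sub]
          linarith [hu.1]
        have h4 : |Λ u| ≤ C := by
          simpa using hC u (Set.Ioo_subset_Icc_self hu)
        rw [Real.norm_eq_abs, abs_mul, abs_mul, abs_mul, abs_pow,
          abs_of_nonneg h2]
        calc |d m| * |u - x ^ ρ| ^ m * ((x ^ ρ - u) ^ (-α) * |Λ u|)
            ≤ |d m| * (x ^ ρ - a ^ ρ) ^ m * ((x ^ ρ - u) ^ (-α) * C) := by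
              apply mul_le_mul (by
                apply mul_le_mul_of_nonneg_left h3 (abs_nonneg _))
                (by apply mul_le_mul_of_nonneg_left h4 h2)
                (by positivity) (by positivity)
          _ = (|d m| * (x ^ ρ - a ^ ρ) ^ m * C) * (x ^ ρ - u) ^ (-α) := by ring
      calc (∫ u in J, ‖d m * (u - x ^ ρ) ^ m * ((x ^ ρ - u) ^ (-α) * Λ u)‖)
          ≤ ∫ u in J, (|d m| * (x ^ ρ - a ^ ρ) ^ m * C) * (x ^ ρ - u) ^ (-α) := by
            apply MeasureTheory.setIntegral_mono_on (hFi m).norm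
              (hKint.const_mul _) measurableSet_Ioo hb
        _ = |d m| * (x ^ ρ - a ^ ρ) ^ m * (C * K) := by
            rw [MeasureTheory.integral_const_mul]; ring
    have hmain := MeasureTheory.hasSum_integral_of_summable_integral_norm
      (μ := MeasureTheory.volume.restrict J) hFi hFnorm
    convert hmain using 1
    · rfl
    apply MeasureTheory.setIntegral_congr_fun measurableSet_Ioo
    intro u hu
    beta_reduce
    have := ((hpt u).mul_right ((x ^ ρ - u) ^ (-α) * Λ u)).tsum_eq
    rw [← this]
  -- apply the exchange to the two families
  have hS1 : HasSum
      (fun m => ∫ u in J, ((m.factorial : ℝ))⁻¹ * iteratedDeriv m (deriv h) (x ^ ρ)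
        * (u - x ^ ρ) ^ m * ((x ^ ρ - u) ^ (-α) * w u))
      (∫ u in J, deriv h u * ((x ^ ρ - u) ^ (-α) * w u)) := by
    have := exchange (fun m => ((m.factorial : ℝ))⁻¹ * iteratedDeriv m (deriv h) (x ^ ρ))
      w (deriv h) hwd.continuous
      (by
        apply Summable.congr (hh'.summable_taylor (x ^ ρ) hR.le)
        intro m
        rw [abs_mul, abs_of_nonneg (by positivity : (0:ℝ) ≤ ((m.factorial : ℝ))⁻¹)]
        ring)
      (fun u => by
        have := hh'.hasSum_taylor (x ^ ρ) u
        exact this)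
    exact this
  have hS2 : HasSum
      (fun m => ∫ u in J, ((m.factorial : ℝ))⁻¹ * iteratedDeriv m h (x ^ ρ)
        * (u - x ^ ρ) ^ m * ((x ^ ρ - u) ^ (-α) * deriv w u))
      (∫ u in J, h u * ((x ^ ρ - u) ^ (-α) * deriv w u)) := by
    have := exchange (fun m => ((m.factorial : ℝ))⁻¹ * iteratedDeriv m h (x ^ ρ))
      (deriv w) h hw'd.continuous
      (by
        apply Summable.congr (hh.summable_taylor (x ^ ρ) hR.le)
        intro m
        rw [abs_mul, abs_of_nonneg (by positivity : (0:ℝ) ≤ ((m.factorial : ℝ))⁻¹)]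
        ring)
      (fun u => hh.hasSum_taylor (x ^ ρ) u)
    exact this
  -- named integral families
  set U : ℕ → ℝ := fun m => ∫ u in J, ((m.factorial : ℝ))⁻¹ * iteratedDeriv m (deriv h) (x ^ ρ)
      * (u - x ^ ρ) ^ m * ((x ^ ρ - u) ^ (-α) * w u) with hUdef
  set V2 : ℕ → ℝ := fun m => ∫ u in J, ((m.factorial : ℝ))⁻¹ * iteratedDeriv m h (x ^ ρ)
      * (u - x ^ ρ) ^ m * ((x ^ ρ - u) ^ (-α) * deriv w u) with hV2def
  set Wi : ℕ → ℝ := fun n => ∫ u in J, (x ^ ρ - u) ^ ((n:ℝ) - α) * w u with hWidef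
  -- values of the integrals
  have hUval : ∀ m : ℕ, U m = ((m.factorial : ℝ))⁻¹ * iteratedDeriv m (deriv h) (x ^ ρ)
      * (-1:ℝ) ^ m * Wi m := by
    intro m
    rw [hUdef, hWidef]
    simp only
    rw [← MeasureTheory.integral_const_mul]
    apply MeasureTheory.setIntegral_congr_fun measurableSet_Ioo
    intro u hu
    beta_reduce
    rw [show ((m.factorial : ℝ))⁻¹ * iteratedDeriv m (deriv h) (x ^ ρ) * (u - x ^ ρ) ^ m
        * ((x ^ ρ - u) ^ (-α) * w u)
      = ((m.factorial : ℝ))⁻¹ * iteratedDeriv m (deriv h) (x ^ ρ)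
        * ((u - x ^ ρ) ^ m * (x ^ ρ - u) ^ (-α)) * w u by ring, hmerge u hu.2 m]
    ring
  have hV2val : ∀ m : ℕ, V2 m = ((m.factorial : ℝ))⁻¹ * iteratedDeriv m h (x ^ ρ)
      * (-1:ℝ) ^ m * ∫ u in J, (x ^ ρ - u) ^ ((m:ℝ) - α) * deriv w u := by
    intro m
    rw [hV2def]
    simp only
    rw [← MeasureTheory.integral_const_mul]
    apply MeasureTheory.setIntegral_congr_fun measurableSet_Ioo
    intro u hu
    beta_reduce
    rw [show ((m.factorial : ℝ))⁻¹ * iteratedDeriv m h (x ^ ρ) * (u - x ^ ρ) ^ m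
        * ((x ^ ρ - u) ^ (-α) * deriv w u)
      = ((m.factorial : ℝ))⁻¹ * iteratedDeriv m h (x ^ ρ)
        * ((u - x ^ ρ) ^ m * (x ^ ρ - u) ^ (-α)) * deriv w u by ring, hmerge u hu.2 m]
    ring
  -- FTC / integration by parts
  have hVsucc : ∀ n : ℕ, (∫ u in J, (x ^ ρ - u) ^ (((n+1:ℕ):ℝ) - α) * deriv w u)
      = -((x ^ ρ - a ^ ρ) ^ (((n+1:ℕ):ℝ) - α) * w (a ^ ρ)) + ((((n+1:ℕ):ℝ)) - α) * Wi n := by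
    intro n
    have hc : ((n+1:ℕ):ℝ) = (n:ℝ) + 1 := by push_cast; ring
    have hβ : (0:ℝ) < ((n+1:ℕ):ℝ) - α := by
      rw [hc]; nlinarith [(Nat.cast_nonneg n : (0:ℝ) ≤ (n:ℝ))]
    have := ftc_w hAX hβ hwd hw'd.continuous
    rw [show ((n+1:ℕ):ℝ) - α - 1 = (n:ℝ) - α by rw [hc]; ring] at this
    rw [hJdef]
    rw [this, hWidef]
  -- the three HasSum components
  set shiftW : ℕ → ℝ := fun m => match m with
    | 0 => (0:ℝ)
    | Nat.succ n => U n
    with hshiftdef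
  have hshift : HasSum shiftW (∫ u in J, deriv h u * ((x ^ ρ - u) ^ (-α) * w u)) := by
    have h1 : HasSum (fun n => shiftW (n + 1))
        (∫ u in J, deriv h u * ((x ^ ρ - u) ^ (-α) * w u)) := hS1
    have h2 := (hasSum_nat_add_iff 1).mp h1
    have h3 : shiftW 0 = 0 := rfl
    simpa [h3] using h2
  set full : ℕ → ℝ := fun m => ((m.factorial : ℝ))⁻¹ * iteratedDeriv m h (x ^ ρ)
      * (a ^ ρ - x ^ ρ) ^ m * ((x ^ ρ - a ^ ρ) ^ (-α) * w (a ^ ρ)) with hfulldef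
  have hfull : HasSum full (h (a ^ ρ) * ((x ^ ρ - a ^ ρ) ^ (-α) * w (a ^ ρ))) :=
    (hh.hasSum_taylor (x ^ ρ) (a ^ ρ)).mul_right ((x ^ ρ - a ^ ρ) ^ (-α) * w (a ^ ρ))
  have hg0 : HasSum (fun m => if m = 0 then full 0 else 0) (full 0) := hasSum_ite_eq 0 (full 0)
  have herr : HasSum (fun m => full m - if m = 0 then full 0 else 0)
      (h (a ^ ρ) * ((x ^ ρ - a ^ ρ) ^ (-α) * w (a ^ ρ)) - full 0) := hfull.sub hg0
  have hGrand : HasSum (fun m => shiftW m + V2 m + (full m - if m = 0 then full 0 else 0))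
      ((∫ u in J, deriv h u * ((x ^ ρ - u) ^ (-α) * w u))
        + (∫ u in J, h u * ((x ^ ρ - u) ^ (-α) * deriv w u))
        + (h (a ^ ρ) * ((x ^ ρ - a ^ ρ) ^ (-α) * w (a ^ ρ)) - full 0)) :=
    (hshift.add hS2).add herr
  -- per-index identity
  have hTm : ∀ m : ℕ, genBinom α m * iteratedDeriv m h (x ^ ρ)
        * psiCD a (fun t => t ^ ρ) (fun t => w (t ^ ρ)) (α - m) x
      = (Real.Gamma (1 - α))⁻¹
        * (shiftW m + V2 m + (full m - if m = 0 then full 0 else 0)) := by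
    intro m
    cases m with
    | zero =>
      have hsw : shiftW 0 = 0 := rfl
      rw [hsw, if_pos rfl, Nat.cast_zero, sub_zero, eqD0, hV2val 0]
      rw [show ((0:ℕ):ℝ) - α = -α by norm_num]
      simp only [genBinom, Finset.range_zero, Finset.prod_empty, Nat.factorial_zero,
        iteratedDeriv_zero, Nat.cast_one, pow_zero]
      field_simp
      ring
    | succ n =>
      have hsw : shiftW (n + 1) = U n := rfl
      rw [hsw, if_neg (Nat.succ_ne_zero n), eqD n, hV2val (n+1), hVsucc n, hUval n]
      rw [show iteratedDeriv n (deriv h) (x ^ ρ) = iteratedDeriv (n+1) h (x ^ ρ) from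
        by rw [iteratedDeriv_succ']]
      have hfullval : full (n+1) = (((n+1).factorial : ℝ))⁻¹ * iteratedDeriv (n+1) h (x ^ ρ)
          * ((-1:ℝ) ^ (n+1) * (x ^ ρ - a ^ ρ) ^ (((n+1:ℕ):ℝ) - α)) * w (a ^ ρ) := by
        rw [hfulldef]
        simp only
        rw [show ((((n+1).factorial : ℝ)))⁻¹ * iteratedDeriv (n+1) h (x ^ ρ)
            * (a ^ ρ - x ^ ρ) ^ (n+1) * ((x ^ ρ - a ^ ρ) ^ (-α) * w (a ^ ρ))
          = (((n+1).factorial : ℝ))⁻¹ * iteratedDeriv (n+1) h (x ^ ρ)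
            * ((a ^ ρ - x ^ ρ) ^ (n+1) * (x ^ ρ - a ^ ρ) ^ (-α)) * w (a ^ ρ) by ring,
          hmerge (a ^ ρ) hAX (n+1)]
      rw [hfullval]
      have hGBn := GB hα1 n
      have hΓn : Real.Gamma ((n:ℝ) + 1 - α) ≠ 0 := by
        have : (0:ℝ) < (n:ℝ) + 1 - α := by nlinarith [(Nat.cast_nonneg n : (0:ℝ) ≤ (n:ℝ))]
        exact (Real.Gamma_pos_of_pos this).ne'
      have hfn : ((n.factorial : ℝ)) ≠ 0 := by positivity
      have hfn1 : (((n+1).factorial : ℝ)) ≠ 0 := by positivity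
      have hfs : (((n+1).factorial : ℝ)) = ((n:ℝ)+1) * (n.factorial : ℝ) := by
        rw [Nat.factorial_succ]; push_cast; ring
      have hcast : ((n+1:ℕ):ℝ) = (n:ℝ) + 1 := by push_cast; ring
      rw [hcast] at *
      rw [hfs] at hGBn ⊢
      field_simp
      linear_combination (iteratedDeriv (n+1) h (x ^ ρ) * Wi n) * hGBn
  -- integrability for splitting the total integral
  have hintI1 : MeasureTheory.IntegrableOn
      (fun u => deriv h u * ((x ^ ρ - u) ^ (-α) * w u)) J := by
    apply MeasureTheory.IntegrableOn.congr_fun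
      (int_rpow_mul (β := -α) (by linarith)
        (Λ := fun u => deriv h u * w u)
        ((hh'.differentiable.continuous.mul hwd.continuous).continuousOn))
      (fun u hu => by beta_reduce; ring) measurableSet_Ioo
  have hintI2 : MeasureTheory.IntegrableOn
      (fun u => h u * ((x ^ ρ - u) ^ (-α) * deriv w u)) J := by
    apply MeasureTheory.IntegrableOn.congr_fun
      (int_rpow_mul (β := -α) (by linarith)
        (Λ := fun u => h u * deriv w u)
        ((hhd.continuous.mul hw'd.continuous).continuousOn))
      (fun u hu => by beta_reduce; ring) measurableSet_Ioo
  have hsum12 : (∫ u in J, (x ^ ρ - u) ^ (-α) * (deriv h u * w u + h u * deriv w u))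
      = (∫ u in J, deriv h u * ((x ^ ρ - u) ^ (-α) * w u))
        + (∫ u in J, h u * ((x ^ ρ - u) ^ (-α) * deriv w u)) := by
    rw [← MeasureTheory.integral_add hintI1 hintI2]
    apply MeasureTheory.setIntegral_congr_fun measurableSet_Ioo
    intro u hu
    beta_reduce
    ring
  -- total value identity
  have hval : psiCD a (fun t => t ^ ρ) (fun t => h (t ^ ρ) * w (t ^ ρ)) α x
      - w (a ^ ρ) * (h (x ^ ρ) - h (a ^ ρ)) * (x ^ ρ - a ^ ρ) ^ (-α) / Real.Gamma (1 - α)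
      = (Real.Gamma (1 - α))⁻¹
        * ((∫ u in J, deriv h u * ((x ^ ρ - u) ^ (-α) * w u))
          + (∫ u in J, h u * ((x ^ ρ - u) ^ (-α) * deriv w u))
          + (h (a ^ ρ) * ((x ^ ρ - a ^ ρ) ^ (-α) * w (a ^ ρ)) - full 0)) := by
    rw [eqFG, hsum12]
    have hfull0 : full 0 = h (x ^ ρ) * ((x ^ ρ - a ^ ρ) ^ (-α) * w (a ^ ρ)) := by
      rw [hfulldef]
      simp [iteratedDeriv_zero]
    rw [hfull0]
    field_simp
    ring
  -- conclusion
  have hfinal := hGrand.mul_left ((Real.Gamma (1 - α))⁻¹)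
  have hgoal : (fun m : ℕ => genBinom α m * iteratedDeriv m h (x ^ ρ)
        * psiCD a (fun t => t ^ ρ) (fun t => w (t ^ ρ)) (α - m) x)
      = fun m => (Real.Gamma (1 - α))⁻¹
        * (shiftW m + V2 m + (full m - if m = 0 then full 0 else 0)) := funext hTm
  beta_reduce
  rw [hgoal, hval]
  exact hfinal
end

section
/- (Semigroup property of the Ψ-fractional integral.) Let a < b, Ψ : ℝ → ℝ strictly increasing and continuously differentiable on [a,b] with Ψ'(t) > 0 for all t ∈ [a,b], γ > 0, μ > 0, and f : ℝ → ℝ continuous on [a,b]. Then for every x ∈ (a,b]: (I^{γ;Ψ}(I^{μ;Ψ} f))(x) = (I^{γ+μ;Ψ} f)(x). -/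
open Real

open MeasureTheory intervalIntegral Set


lemma beta_real {p q : ℝ} (hp : 0 < p) (hq : 0 < q) :
    ∫ u in (0:ℝ)..1, u ^ (p - 1) * (1 - u) ^ (q - 1)
      = Real.Gamma p * Real.Gamma q / Real.Gamma (p + q) := by
  have h := Complex.Gamma_mul_Gamma_eq_betaIntegral (s := (p:ℂ)) (t := (q:ℂ))
    (by simpa using hp) (by simpa using hq)
  have hB : Complex.betaIntegral (p:ℂ) (q:ℂ)
      = ((∫ u in (0:ℝ)..1, u ^ (p - 1) * (1 - u) ^ (q - 1) : ℝ) : ℂ) := by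
    rw [Complex.betaIntegral, ← intervalIntegral.integral_ofReal]
    refine intervalIntegral.integral_congr fun v hv => ?_
    rw [Set.uIcc_of_le (by norm_num : (0:ℝ) ≤ 1)] at hv
    push_cast
    rw [Complex.ofReal_cpow hv.1, Complex.ofReal_cpow (by linarith [hv.2])]
    push_cast
    ring
  rw [hB, Complex.Gamma_ofReal, Complex.Gamma_ofReal, ← Complex.ofReal_add,
    Complex.Gamma_ofReal, ← Complex.ofReal_mul, ← Complex.ofReal_mul] at h
  have h' := Complex.ofReal_inj.mp h
  have hG : Real.Gamma (p + q) ≠ 0 := (Real.Gamma_pos_of_pos (by linarith)).ne'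
  field_simp
  linarith [h']

lemma beta_scaled {p q : ℝ} (hp : 0 < p) (hq : 0 < q) {c d : ℝ} (hcd : c < d) :
    ∫ u in c..d, (d - u) ^ (p - 1) * (u - c) ^ (q - 1)
      = (d - c) ^ (p + q - 1) * (Real.Gamma p * Real.Gamma q / Real.Gamma (p + q)) := by
  have hdc : (0:ℝ) < d - c := by linarith
  have key := intervalIntegral.integral_comp_mul_add
    (f := fun u => (d - u) ^ (p - 1) * (u - c) ^ (q - 1)) (a := (0:ℝ)) (b := 1)
    (c := d - c) hdc.ne' c
  simp only [mul_zero, zero_add, mul_one, sub_add_cancel, smul_eq_mul] at key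
  -- key : ∫ v in 0..1, f ((d-c)*v + c) = (d-c)⁻¹ * ∫ u in c..d, f u
  have hpt : ∀ v ∈ Set.uIcc (0:ℝ) 1,
      (d - ((d - c) * v + c)) ^ (p - 1) * (((d - c) * v + c) - c) ^ (q - 1)
        = (d - c) ^ (p + q - 2) * ((1 - v) ^ (p - 1) * v ^ (q - 1)) := by
    intro v hv
    rw [Set.uIcc_of_le (by norm_num : (0:ℝ) ≤ 1)] at hv
    have h1 : d - ((d - c) * v + c) = (d - c) * (1 - v) := by ring
    have h2 : ((d - c) * v + c) - c = (d - c) * v := by ring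
    rw [h1, h2, Real.mul_rpow hdc.le (by linarith [hv.2]), Real.mul_rpow hdc.le hv.1]
    rw [show (d-c)^(p-1)*(1-v)^(p-1)*((d-c)^(q-1)*v^(q-1))
        = (d-c)^(p-1)*(d-c)^(q-1)*((1-v)^(p-1)*v^(q-1)) by ring, ← Real.rpow_add hdc, show p-1+(q-1)=p+q-2 by ring]
  rw [intervalIntegral.integral_congr hpt] at key
  rw [intervalIntegral.integral_const_mul] at key
  have hbeta : ∫ v in (0:ℝ)..1, (1 - v) ^ (p - 1) * v ^ (q - 1)
      = Real.Gamma p * Real.Gamma q / Real.Gamma (p + q) := by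
    have := beta_real hq hp
    rw [show Real.Gamma q * Real.Gamma p = Real.Gamma p * Real.Gamma q by ring,
      show q + p = p + q by ring] at this
    rw [← this]
    exact intervalIntegral.integral_congr fun v _ => by ring
  rw [hbeta] at key
  have : (d - c) * ((d - c) ^ (p + q - 2) * (Real.Gamma p * Real.Gamma q / Real.Gamma (p + q)))
      = (d - c)⁻¹ * (∫ u in c..d, (d - u) ^ (p - 1) * (u - c) ^ (q - 1)) * (d - c) := by
    rw [← key]; ring
  have h3 : (d - c) ^ (p + q - 1) = (d - c) * (d - c) ^ (p + q - 2) := by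
    nth_rewrite 2 [← Real.rpow_one (d-c)]
    rw [← Real.rpow_add hdc]
    ring_nf
  rw [h3]
  field_simp at this ⊢
  linarith [this]
lemma rpow_left_intInt {q : ℝ} (hq : 0 < q) (c d : ℝ) :
    IntervalIntegrable (fun u => (u - c) ^ (q - 1)) volume c d := by
  have h := (intervalIntegrable_rpow' (a := 0) (b := d - c) (by linarith : (-1:ℝ) < q - 1)).comp_sub_right c
  simpa using h

lemma rpow_right_intInt {p : ℝ} (hp : 0 < p) (c d : ℝ) :
    IntervalIntegrable (fun u => (d - u) ^ (p - 1)) volume c d := by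
  have h := (intervalIntegrable_rpow' (a := d - d) (b := d - c) (by linarith : (-1:ℝ) < p - 1)).comp_sub_left d
  simpa using h.symm

lemma betaKernel_intInt {p q : ℝ} (hp : 0 < p) (hq : 0 < q) {c d : ℝ} (hcd : c < d) :
    IntervalIntegrable (fun u => (d - u) ^ (p - 1) * (u - c) ^ (q - 1)) volume c d := by
  set e := (c + d) / 2 with he
  have hce : c ≤ e := by rw [he]; linarith
  have hed : e ≤ d := by rw [he]; linarith
  have hcd' := hcd.le
  have h1 : IntervalIntegrable (fun u => (d - u) ^ (p - 1) * (u - c) ^ (q - 1)) volume c e := by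
    refine IntervalIntegrable.continuousOn_mul ((rpow_left_intInt hq c d).mono_set ?_) ?_
    · rw [Set.uIcc_of_le hce, Set.uIcc_of_le hcd']; exact Set.Icc_subset_Icc le_rfl hed
    · refine ContinuousOn.rpow_const (by fun_prop) fun u hu => Or.inl (by
        rw [Set.uIcc_of_le hce] at hu
        have : u ≤ e := hu.2
        have : d - e > 0 := by rw [he]; linarith
        intro h; rw [sub_eq_zero] at h; rw [he] at *; linarith)
  have h2 : IntervalIntegrable (fun u => (d - u) ^ (p - 1) * (u - c) ^ (q - 1)) volume e d := by
    refine IntervalIntegrable.mul_continuousOn ((rpow_right_intInt hp c d).mono_set ?_) ?_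
    · rw [Set.uIcc_of_le hed, Set.uIcc_of_le hcd']; exact Set.Icc_subset_Icc hce le_rfl
    · refine ContinuousOn.rpow_const (by fun_prop) fun u hu => Or.inl (by
        rw [Set.uIcc_of_le hed] at hu
        have : e ≤ u := hu.1
        have : e - c > 0 := by rw [he]; linarith
        intro h; rw [sub_eq_zero] at h; rw [he] at *; linarith)
  exact h1.trans h2

set_option maxHeartbeats 1000000 in
/-- semigroup property of the Ψ-fractional integral. -/
theorem psiI_semigroup
    (a b : ℝ) (hab : a < b) (Ψ : ℝ → ℝ)
    (hΨmono : StrictMonoOn Ψ (Set.Icc a b))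
    (hΨC1 : ContDiffOn ℝ 1 Ψ (Set.Icc a b))
    (hΨpos : ∀ t ∈ Set.Icc a b, 0 < deriv Ψ t)
    (γ μ : ℝ) (hγ : 0 < γ) (hμ : 0 < μ)
    (f : ℝ → ℝ) (hf : ContinuousOn f (Set.Icc a b))
    (x : ℝ) (hx : x ∈ Set.Ioc a b) :
    psiI a Ψ (fun y => psiI a Ψ f μ y) γ x = psiI a Ψ f (γ + μ) x := by
  obtain ⟨hax, hxb⟩ := hx
  have hxab : x ∈ Set.Icc a b := ⟨hax.le, hxb⟩
  have hud : UniqueDiffOn ℝ (Set.Icc a b) := uniqueDiffOn_Icc hab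
  have hdiff : ∀ t ∈ Set.Icc a b, HasDerivAt Ψ (deriv Ψ t) t := fun t ht =>
    (differentiableAt_of_deriv_ne_zero (hΨpos t ht).ne').hasDerivAt
  have hd'cont : ContinuousOn (deriv Ψ) (Set.Icc a b) := by
    refine (hΨC1.continuousOn_derivWithin hud le_rfl).congr fun t ht => ?_
    exact ((hdiff t ht).hasDerivWithinAt.derivWithin (hud t ht)).symm
  -- clamp to [a,b]
  set pr : ℝ → ℝ := fun y => max a (min b y) with hprdef
  have hprcont : Continuous pr := continuous_const.max (continuous_const.min continuous_id)
  have hprmem : ∀ y, pr y ∈ Set.Icc a b := fun y =>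
    ⟨le_max_left _ _, max_le hab.le (min_le_left _ _)⟩
  have hprid : ∀ y ∈ Set.Icc a b, pr y = y := fun y hy => by
    simp only [hprdef]; rw [min_eq_right hy.2, max_eq_right hy.1]
  set D : ℝ → ℝ := fun y => deriv Ψ (pr y) with hDdef
  set P : ℝ → ℝ := fun y => Ψ (pr y) with hPdef
  set G : ℝ → ℝ := fun y => f (pr y) with hGdef
  have hDcont : Continuous D := hd'cont.comp_continuous hprcont hprmem
  have hPcont : Continuous P := hΨC1.continuousOn.comp_continuous hprcont hprmem
  have hGcont : Continuous G := hf.comp_continuous hprcont hprmem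
  have hDeq : ∀ y ∈ Set.Icc a b, D y = deriv Ψ y := fun y hy => by
    simp only [hDdef]; rw [hprid y hy]
  have hPeq : ∀ y ∈ Set.Icc a b, P y = Ψ y := fun y hy => by
    simp only [hPdef]; rw [hprid y hy]
  have hGeq : ∀ y ∈ Set.Icc a b, G y = f y := fun y hy => by
    simp only [hGdef]; rw [hprid y hy]
  -- bounds
  obtain ⟨tm, htm, hmOn⟩ :=
    isCompact_Icc.exists_isMinOn (Set.nonempty_Icc.mpr hab.le) hd'cont
  obtain ⟨tM, htM, hMOn⟩ :=
    isCompact_Icc.exists_isMaxOn (Set.nonempty_Icc.mpr hab.le) hd'cont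
  obtain ⟨tC, htC, hCOn⟩ :=
    isCompact_Icc.exists_isMaxOn (Set.nonempty_Icc.mpr hab.le) hf.abs
  set m := deriv Ψ tm with hmdef
  set M := deriv Ψ tM with hMdef
  set C := |f tC| with hCdef
  have hm0 : 0 < m := hΨpos tm htm
  have hmle : ∀ y ∈ Set.Icc a b, m ≤ deriv Ψ y := fun y hy => hmOn hy
  have hMle : ∀ y ∈ Set.Icc a b, deriv Ψ y ≤ M := fun y hy => hMOn hy
  have hM0 : 0 < M := lt_of_lt_of_le hm0 (le_trans (hmle tM htM) le_rfl)
  have hC0 : 0 ≤ C := abs_nonneg _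
  have hDm : ∀ y, m ≤ D y := fun y => hmle (pr y) (hprmem y)
  have hDM : ∀ y, D y ≤ M := fun y => hMle (pr y) (hprmem y)
  have hGC : ∀ y, |G y| ≤ C := fun y => hCOn (hprmem y)
  -- mean value sandwich
  have hMVT : ∀ s t, s ∈ Set.Icc a b → t ∈ Set.Icc a b → s ≤ t →
      m * (t - s) ≤ P t - P s ∧ P t - P s ≤ M * (t - s) := by
    intro s t hs ht hst
    rcases eq_or_lt_of_le hst with rfl | hlt
    · simp
    · obtain ⟨c, hc, hceq⟩ := exists_hasDerivAt_eq_slope Ψ (deriv Ψ) hlt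
        (hΨC1.continuousOn.mono (Set.Icc_subset_Icc hs.1 ht.2))
        (fun z hz => hdiff z ⟨by linarith [hs.1, hz.1], by linarith [ht.2, hz.2]⟩)
      have hcab : c ∈ Set.Icc a b := ⟨by linarith [hs.1, hc.1], by linarith [ht.2, hc.2]⟩
      have hts : (0:ℝ) < t - s := by linarith
      have heq : Ψ t - Ψ s = deriv Ψ c * (t - s) := by
        field_simp at hceq; linarith [hceq]
      rw [hPeq s hs, hPeq t ht, heq]
      constructor
      · exact mul_le_mul_of_nonneg_right (hmle c hcab) hts.le
      · exact mul_le_mul_of_nonneg_right (hMle c hcab) hts.le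
  have hPmono : ∀ s t, s ∈ Set.Icc a b → t ∈ Set.Icc a b → s < t → 0 < P t - P s := by
    intro s t hs ht hst
    have := (hMVT s t hs ht hst.le).1
    nlinarith
  have hPle : ∀ s t, s ∈ Set.Icc a b → t ∈ Set.Icc a b → s ≤ t → 0 ≤ P t - P s := by
    intro s t hs ht hst
    have := (hMVT s t hs ht hst).1
    nlinarith
  -- rpow sandwich
  have hk : ∀ α : ℝ, 0 < α → ∀ s t, s ∈ Set.Icc a b → t ∈ Set.Icc a b → s ≤ t →
      (P t - P s) ^ (α - 1) ≤ max (m ^ (α-1)) (M ^ (α-1)) * (t - s) ^ (α - 1) := by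
    intro α hα s t hs ht hst
    set k := max (m ^ (α-1)) (M ^ (α-1)) with hkdef
    have hts : (0:ℝ) ≤ t - s := by linarith
    rcases le_or_gt 1 α with h1 | h1
    · calc (P t - P s) ^ (α - 1)
          ≤ (M * (t - s)) ^ (α - 1) :=
            Real.rpow_le_rpow (hPle s t hs ht hst) (hMVT s t hs ht hst).2 (by linarith)
        _ = M ^ (α-1) * (t - s) ^ (α - 1) := Real.mul_rpow hM0.le hts
        _ ≤ k * (t - s) ^ (α - 1) :=
            mul_le_mul_of_nonneg_right (le_max_right _ _) (Real.rpow_nonneg hts _)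
    · rcases eq_or_lt_of_le hst with rfl | hlt
      · rw [sub_self, sub_self, Real.zero_rpow (show α - 1 ≠ 0 by
          intro h; rw [sub_eq_zero] at h; linarith)]
        simp
      · have h2 : 0 < m * (t - s) := mul_pos hm0 (by linarith)
        calc (P t - P s) ^ (α - 1)
            ≤ (m * (t - s)) ^ (α - 1) :=
              Real.rpow_le_rpow_of_nonpos h2 (hMVT s t hs ht hlt.le).1 (by linarith)
          _ = m ^ (α-1) * (t - s) ^ (α - 1) := Real.mul_rpow hm0.le hts
          _ ≤ k * (t - s) ^ (α - 1) :=
              mul_le_mul_of_nonneg_right (le_max_left _ _) (Real.rpow_nonneg hts _)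
  have hk0 : ∀ α : ℝ, 0 < max (m ^ (α-1)) (M ^ (α-1)) :=
    fun α => lt_max_iff.mpr (Or.inl (Real.rpow_pos_of_pos hm0 _))
  set kγ := max (m ^ (γ-1)) (M ^ (γ-1)) with hkγdef
  set kμ := max (m ^ (μ-1)) (M ^ (μ-1)) with hkμdef
  -- the kernels
  set Kf : ℝ → ℝ → ℝ :=
    fun t s => D t * (P x - P t) ^ (γ - 1) * (D s * (P t - P s) ^ (μ - 1) * G s) with hKfdef
  set F : ℝ × ℝ → ℝ :=
    Set.indicator {z : ℝ × ℝ | z.2 ≤ z.1} (fun z => Kf z.1 z.2) with hFdef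
  have hKm : Measurable fun z : ℝ × ℝ => Kf z.1 z.2 := by
    simp only [hKfdef]
    exact ((hDcont.comp continuous_fst).measurable.mul
        ((continuous_const.sub (hPcont.comp continuous_fst)).measurable.pow_const _)).mul
      (((hDcont.comp continuous_snd).measurable.mul
        (((hPcont.comp continuous_fst).sub (hPcont.comp continuous_snd)).measurable.pow_const
          _)).mul (hGcont.comp continuous_snd).measurable)
  have hFm : Measurable F :=
    hKm.indicator (measurableSet_le measurable_snd measurable_fst)
  have hΓγ : (0:ℝ) < Real.Gamma γ := Real.Gamma_pos_of_pos hγ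
  have hΓμ : (0:ℝ) < Real.Gamma μ := Real.Gamma_pos_of_pos hμ
  have hΓγμ : (0:ℝ) < Real.Gamma (γ + μ) := Real.Gamma_pos_of_pos (by linarith)
  have hγμ : γ + μ ≠ 0 := by positivity
  have hkγ0 : 0 < kγ := hk0 γ
  have hkμ0 : 0 < kμ := hk0 μ
  -- pointwise bound for the kernel
  have hKbd : ∀ t ∈ Set.Ioc a x, ∀ s ∈ Set.Ioc a t,
      |Kf t s| ≤ (M * (P x - P t) ^ (γ - 1)) * ((M * C * kμ) * (t - s) ^ (μ - 1)) := by
    intro t ht s hs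
    have htab : t ∈ Set.Icc a b := ⟨ht.1.le, le_trans ht.2 hxb⟩
    have hsab : s ∈ Set.Icc a b := ⟨hs.1.le, le_trans (le_trans hs.2 ht.2) hxb⟩
    have h1 : 0 ≤ (P x - P t) ^ (γ - 1) := Real.rpow_nonneg (hPle t x htab hxab ht.2) _
    have h2 : 0 ≤ (P t - P s) ^ (μ - 1) := Real.rpow_nonneg (hPle s t hsab htab hs.2) _
    have h3 : (P t - P s) ^ (μ - 1) ≤ kμ * (t - s) ^ (μ - 1) := hk μ hμ s t hsab htab hs.2
    have h4 : (0:ℝ) ≤ (t - s) ^ (μ - 1) := Real.rpow_nonneg (by linarith [hs.2]) _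
    have hDt : |D t| ≤ M := by rw [abs_of_pos (lt_of_lt_of_le hm0 (hDm t))]; exact hDM t
    have hDs : |D s| ≤ M := by rw [abs_of_pos (lt_of_lt_of_le hm0 (hDm s))]; exact hDM s
    have hGs : |G s| ≤ C := hGC s
    have hDt0 : (0:ℝ) ≤ |D t| := abs_nonneg _
    have hDs0 : (0:ℝ) ≤ |D s| := abs_nonneg _
    have hGs0 : (0:ℝ) ≤ |G s| := abs_nonneg _
    calc |Kf t s| = |D t| * (P x - P t) ^ (γ - 1) * (|D s| * (P t - P s) ^ (μ - 1) * |G s|) := by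
          simp only [hKfdef]
          rw [abs_mul, abs_mul, abs_mul, abs_mul, abs_of_nonneg h1, abs_of_nonneg h2]
      _ ≤ M * (P x - P t) ^ (γ - 1) * (M * (kμ * (t - s) ^ (μ - 1)) * C) := by
          refine mul_le_mul (mul_le_mul_of_nonneg_right hDt h1) ?_ ?_ (by positivity)
          · exact mul_le_mul (mul_le_mul hDs h3 h2 hM0.le) hGs hGs0
              (by positivity)
          · positivity
      _ = (M * (P x - P t) ^ (γ - 1)) * ((M * C * kμ) * (t - s) ^ (μ - 1)) := by ring
  -- Integrability of the single-variable kernel in s, for t ∈ Ioc a x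
  have hKint : ∀ t ∈ Set.Ioc a x, IntegrableOn (fun s => Kf t s) (Set.Ioc a t) := by
    intro t ht
    have hmeas : Measurable fun s => Kf t s := by
      simp only [hKfdef]
      exact measurable_const.mul ((hDcont.measurable.mul
        ((continuous_const.sub hPcont).measurable.pow_const _)).mul hGcont.measurable)
    have hbnd : IntegrableOn
        (fun s => (M * (P x - P t) ^ (γ - 1)) * ((M * C * kμ) * (t - s) ^ (μ - 1)))
        (Set.Ioc a t) := by
      exact (((intervalIntegrable_iff_integrableOn_Ioc_of_le ht.1.le).mp
        (rpow_right_intInt hμ a t)).const_mul _).const_mul _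
    refine Integrable.mono hbnd hmeas.aestronglyMeasurable ?_
    refine (ae_restrict_iff' measurableSet_Ioc).mpr (ae_of_all _ fun s hs => ?_)
    rw [Real.norm_eq_abs, Real.norm_eq_abs]
    refine le_trans (hKbd t ht s hs) (le_abs_self _)
  have hiic : ∀ t ∈ Set.Ioc a x, Set.Ioc a x ∩ Set.Iic t = Set.Ioc a t := by
    intro t ht
    ext s; simp only [Set.mem_inter_iff, Set.mem_Iic, Set.mem_Ioc]
    constructor
    · rintro ⟨⟨h1, h2⟩, h3⟩; exact ⟨h1, h3⟩
    · rintro ⟨h1, h2⟩; exact ⟨⟨h1, le_trans h2 ht.2⟩, h2⟩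
  have hFind : ∀ t : ℝ, (fun s => F (t, s)) = Set.indicator (Set.Iic t) (fun s => Kf t s) := by
    intro t; funext s
    simp only [hFdef, Set.indicator_apply, Set.mem_setOf_eq, Set.mem_Iic]
  have hpowint : ∀ t ∈ Set.Ioc a x,
      (∫ s in Set.Ioc a t, (t - s) ^ (μ - 1)) = (t - a) ^ μ / μ := by
    intro t ht
    rw [← intervalIntegral.integral_of_le ht.1.le]
    rw [intervalIntegral.integral_comp_sub_left (fun u => u ^ (μ - 1)) t]
    rw [integral_rpow (Or.inl (by linarith : (-1:ℝ) < μ - 1))]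
    rw [sub_self, show μ - 1 + 1 = μ by ring, Real.zero_rpow hμ.ne']
    ring
  -- full Fubini integrability
  have hFint : Integrable F
      ((volume.restrict (Set.Ioc a x)).prod (volume.restrict (Set.Ioc a x))) := by
    rw [MeasureTheory.integrable_prod_iff hFm.aestronglyMeasurable]
    constructor
    · refine (ae_restrict_iff' measurableSet_Ioc).mpr (ae_of_all _ fun t ht => ?_)
      rw [hFind t, integrable_indicator_iff measurableSet_Iic, IntegrableOn,
        Measure.restrict_restrict measurableSet_Iic, Set.inter_comm, hiic t ht]
      exact hKint t ht
    · set c2 := M * kγ * (M * C * kμ * ((b - a) ^ μ / μ)) with hc2def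
      have hc20 : (0:ℝ) ≤ c2 := by
        have h5 : (0:ℝ) ≤ (b - a) ^ μ := Real.rpow_nonneg (by linarith) _
        have := hm0.le
        rw [hc2def]
        positivity
      have hgint : IntegrableOn (fun t => c2 * (x - t) ^ (γ - 1)) (Set.Ioc a x) :=
        ((intervalIntegrable_iff_integrableOn_Ioc_of_le hax.le).mp
          (rpow_right_intInt hγ a x)).const_mul _
      refine Integrable.mono hgint hFm.aestronglyMeasurable.norm.integral_prod_right' ?_
      refine (ae_restrict_iff' measurableSet_Ioc).mpr (ae_of_all _ fun t ht => ?_)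
      have htab : t ∈ Set.Icc a b := ⟨ht.1.le, le_trans ht.2 hxb⟩
      have h1 : (0:ℝ) ≤ (P x - P t) ^ (γ - 1) :=
        Real.rpow_nonneg (hPle t x htab hxab ht.2) _
      have hnrm : (∫ s in Set.Ioc a x, ‖F (t, s)‖)
          = ∫ s in Set.Ioc a t, ‖Kf t s‖ := by
        have : (fun s => ‖F (t, s)‖) = Set.indicator (Set.Iic t) (fun s => ‖Kf t s‖) := by
          funext s
          rw [congrFun (hFind t) s]
          exact norm_indicator_eq_indicator_norm _ _
        rw [this, setIntegral_indicator measurableSet_Iic, hiic t ht]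
      have hstep : (∫ s in Set.Ioc a t, ‖Kf t s‖)
          ≤ (M * (P x - P t) ^ (γ - 1)) * ((M * C * kμ) * ((t - a) ^ μ / μ)) := by
        have hint2 : IntegrableOn
            (fun s => (M * (P x - P t) ^ (γ - 1)) * ((M * C * kμ) * (t - s) ^ (μ - 1)))
            (Set.Ioc a t) :=
          (((intervalIntegrable_iff_integrableOn_Ioc_of_le ht.1.le).mp
            (rpow_right_intInt hμ a t)).const_mul _).const_mul _
        calc (∫ s in Set.Ioc a t, ‖Kf t s‖)
            ≤ ∫ s in Set.Ioc a t,
                (M * (P x - P t) ^ (γ - 1)) * ((M * C * kμ) * (t - s) ^ (μ - 1)) := by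
              refine setIntegral_mono_on (hKint t ht).norm hint2 measurableSet_Ioc ?_
              intro s hs
              exact hKbd t ht s hs
          _ = (M * (P x - P t) ^ (γ - 1)) * ((M * C * kμ)
                * ∫ s in Set.Ioc a t, (t - s) ^ (μ - 1)) := by
              rw [MeasureTheory.integral_const_mul, MeasureTheory.integral_const_mul]
          _ = (M * (P x - P t) ^ (γ - 1)) * ((M * C * kμ) * ((t - a) ^ μ / μ)) := by
              rw [hpowint t ht]
      rw [Real.norm_eq_abs, Real.norm_eq_abs, abs_of_nonneg
        (integral_nonneg fun s => norm_nonneg _),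
        abs_of_nonneg (mul_nonneg hc20 (Real.rpow_nonneg (by linarith [ht.2]) _))]
      rw [hnrm]
      refine le_trans hstep ?_
      have h2 : (P x - P t) ^ (γ - 1) ≤ kγ * (x - t) ^ (γ - 1) :=
        hk γ hγ t x htab hxab ht.2
      have h3 : (t - a) ^ μ ≤ (b - a) ^ μ :=
        Real.rpow_le_rpow (by linarith [ht.1]) (by linarith [htab.2]) hμ.le
      have h4 : (0:ℝ) ≤ (x - t) ^ (γ - 1) := Real.rpow_nonneg (by linarith [ht.2]) _
      have h5 : (0:ℝ) ≤ (t - a) ^ μ := Real.rpow_nonneg (by linarith [ht.1]) _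
      calc (M * (P x - P t) ^ (γ - 1)) * ((M * C * kμ) * ((t - a) ^ μ / μ))
          ≤ (M * (kγ * (x - t) ^ (γ - 1))) * ((M * C * kμ) * ((b - a) ^ μ / μ)) := by
            have e1 : M * (P x - P t) ^ (γ - 1) ≤ M * (kγ * (x - t) ^ (γ - 1)) :=
              mul_le_mul_of_nonneg_left h2 hM0.le
            have e2 : (M * C * kμ) * ((t - a) ^ μ / μ) ≤ (M * C * kμ) * ((b - a) ^ μ / μ) :=
              mul_le_mul_of_nonneg_left ((div_le_div_iff_of_pos_right hμ).mpr h3)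
                (mul_nonneg (mul_nonneg hM0.le hC0) hkμ0.le)
            exact mul_le_mul e1 e2
              (mul_nonneg (mul_nonneg (mul_nonneg hM0.le hC0) hkμ0.le) (div_nonneg h5 hμ.le))
              (mul_nonneg hM0.le (mul_nonneg hkγ0.le h4))
        _ = c2 * (x - t) ^ (γ - 1) := by rw [hc2def]; ring
  -- the inner integral identity for t ∈ Ioc a x
  have hinner : ∀ t ∈ Set.Ioc a x,
      (∫ s in Set.Ioc a x, F (t, s)) = ∫ s in Set.Ioc a t, Kf t s := by
    intro t ht
    rw [hFind t, setIntegral_indicator measurableSet_Iic, hiic t ht]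
  -- the t-integral computation for s ∈ Ioo a x
  have houter : ∀ s ∈ Set.Ioo a x,
      (∫ t in Set.Ioc a x, F (t, s))
        = (D s * (P x - P s) ^ (γ + μ - 1) * G s)
            * (Real.Gamma γ * Real.Gamma μ / Real.Gamma (γ + μ)) := by
    intro s hs
    have hsab : s ∈ Set.Icc a b := ⟨hs.1.le, le_trans hs.2.le hxb⟩
    have hsx : s < x := hs.2
    have hPsx : P s < P x := by have := hPmono s x hsab hxab hsx; linarith
    have hFind2 : (fun t => F (t, s)) = Set.indicator (Set.Ici s) (fun t => Kf t s) := by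
      funext t
      simp only [hFdef, Set.indicator_apply, Set.mem_setOf_eq, Set.mem_Ici]
    have hicc : Set.Ioc a x ∩ Set.Ici s = Set.Icc s x := by
      ext t; simp only [Set.mem_inter_iff, Set.mem_Ici, Set.mem_Ioc, Set.mem_Icc]
      constructor
      · rintro ⟨⟨h1, h2⟩, h3⟩; exact ⟨h3, h2⟩
      · rintro ⟨h1, h2⟩; exact ⟨⟨lt_of_lt_of_le hs.1 h1, h2⟩, h1⟩
    rw [hFind2, setIntegral_indicator measurableSet_Ici, hicc,
      integral_Icc_eq_integral_Ioc, ← intervalIntegral.integral_of_le hsx.le]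
    set g0 : ℝ → ℝ := fun u => (P x - u) ^ (γ - 1) * (u - P s) ^ (μ - 1) with hg0def
    have hre : Set.EqOn (fun t => Kf t s)
        (fun t => (D s * G s) * (D t • (g0 ∘ P) t)) (Set.uIcc s x) := by
      intro t _
      simp only [hKfdef, hg0def, smul_eq_mul, Function.comp_apply]
      ring
    rw [intervalIntegral.integral_congr hre, intervalIntegral.integral_const_mul]
    have hyp1 : ContinuousOn P (Set.uIcc s x) := hPcont.continuousOn
    have hyp2 : ∀ t ∈ Set.Ioo (min s x) (max s x), HasDerivWithinAt P (D t) (Set.Ioi t) t := by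
      intro t ht'
      rw [min_eq_left hsx.le, max_eq_right hsx.le] at ht'
      have htab : t ∈ Set.Ioo a b := ⟨lt_trans hs.1 ht'.1, lt_of_lt_of_le ht'.2 hxb⟩
      have hPev : P =ᶠ[nhds t] Ψ :=
        Filter.eventuallyEq_of_mem (Ioo_mem_nhds htab.1 htab.2)
          (fun y hy => hPeq y (Set.Ioo_subset_Icc_self hy))
      have hda := (hdiff t (Set.Ioo_subset_Icc_self htab)).congr_of_eventuallyEq hPev
      rw [hDeq t (Set.Ioo_subset_Icc_self htab)]
      exact hda.hasDerivWithinAt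
    have hyp3 : ContinuousOn g0 (P '' Set.Ioo (min s x) (max s x)) := by
      rw [min_eq_left hsx.le, max_eq_right hsx.le]
      have himg : ∀ u ∈ P '' Set.Ioo s x, P s < u ∧ u < P x := by
        rintro u ⟨t, ht', rfl⟩
        have htab : t ∈ Set.Icc a b := ⟨le_trans hs.1.le ht'.1.le, le_trans ht'.2.le hxb⟩
        constructor
        · have := hPmono s t hsab htab ht'.1; linarith
        · have := hPmono t x htab hxab ht'.2; linarith
      refine ContinuousOn.mul ?_ ?_
      · refine ContinuousOn.rpow_const (continuous_const.sub continuous_id).continuousOn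
          fun u hu => Or.inl ?_
        have h6 := (himg u hu).2; intro hh; rw [sub_eq_zero] at hh; linarith
      · refine ContinuousOn.rpow_const (continuous_id.sub continuous_const).continuousOn
          fun u hu => Or.inl ?_
        have h6 := (himg u hu).1; intro hh; rw [sub_eq_zero] at hh; linarith
    have hyp4 : IntegrableOn g0 (P '' Set.uIcc s x) := by
      have himg2 : P '' Set.uIcc s x ⊆ Set.Icc (P s) (P x) := by
        rw [Set.uIcc_of_le hsx.le]
        rintro u ⟨t, ht', rfl⟩
        have htab : t ∈ Set.Icc a b := ⟨le_trans hs.1.le ht'.1, le_trans ht'.2 hxb⟩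
        constructor
        · have := hPle s t hsab htab ht'.1; linarith
        · have := hPle t x htab hxab ht'.2; linarith
      refine IntegrableOn.mono_set ?_ himg2
      exact (intervalIntegrable_iff_integrableOn_Icc_of_le hPsx.le).mp
        (betaKernel_intInt hγ hμ hPsx)
    have hyp5 : IntegrableOn (fun t => D t • (g0 ∘ P) t) (Set.uIcc s x) := by
      rw [Set.uIcc_of_le hsx.le]
      have hmeas2 : Measurable fun t => D t • (g0 ∘ P) t := by
        simp only [hg0def, smul_eq_mul, Function.comp_apply]
        exact hDcont.measurable.mul
          (((continuous_const.sub hPcont).measurable.pow_const _).mul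
            ((hPcont.sub continuous_const).measurable.pow_const _))
      have hbnd2 : IntegrableOn
          (fun t => (M * kγ * kμ) * ((x - t) ^ (γ - 1) * (t - s) ^ (μ - 1))) (Set.Icc s x) :=
        ((intervalIntegrable_iff_integrableOn_Icc_of_le hsx.le).mp
          (betaKernel_intInt hγ hμ hsx)).const_mul _
      refine Integrable.mono hbnd2 hmeas2.aestronglyMeasurable ?_
      refine (ae_restrict_iff' measurableSet_Icc).mpr (ae_of_all _ fun t ht' => ?_)
      have htab : t ∈ Set.Icc a b := ⟨le_trans hs.1.le ht'.1, le_trans ht'.2 hxb⟩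
      have e1 : 0 ≤ P x - P t := hPle t x htab hxab ht'.2
      have e2 : 0 ≤ P t - P s := hPle s t hsab htab ht'.1
      have e3 : (P x - P t) ^ (γ - 1) ≤ kγ * (x - t) ^ (γ - 1) := hk γ hγ t x htab hxab ht'.2
      have e4 : (P t - P s) ^ (μ - 1) ≤ kμ * (t - s) ^ (μ - 1) := hk μ hμ s t hsab htab ht'.1
      have e5 : (0:ℝ) ≤ (x - t) ^ (γ - 1) := Real.rpow_nonneg (by linarith [ht'.2]) _
      have e6 : (0:ℝ) ≤ (t - s) ^ (μ - 1) := Real.rpow_nonneg (by linarith [ht'.1]) _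
      rw [Real.norm_eq_abs, Real.norm_eq_abs, smul_eq_mul]
      simp only [hg0def, Function.comp_apply]
      rw [abs_mul, abs_mul, abs_of_nonneg (Real.rpow_nonneg e1 _),
        abs_of_nonneg (Real.rpow_nonneg e2 _),
        abs_of_pos (lt_of_lt_of_le hm0 (hDm t)),
        abs_of_nonneg (mul_nonneg (mul_nonneg (mul_nonneg hM0.le hkγ0.le) hkμ0.le)
          (mul_nonneg e5 e6))]
      calc D t * ((P x - P t) ^ (γ - 1) * (P t - P s) ^ (μ - 1))
          ≤ M * ((kγ * (x - t) ^ (γ - 1)) * (kμ * (t - s) ^ (μ - 1))) := by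
            refine mul_le_mul (hDM t) ?_
              (mul_nonneg (Real.rpow_nonneg e1 _) (Real.rpow_nonneg e2 _)) hM0.le
            exact mul_le_mul e3 e4 (Real.rpow_nonneg e2 _) (mul_nonneg hkγ0.le e5)
        _ = (M * kγ * kμ) * ((x - t) ^ (γ - 1) * (t - s) ^ (μ - 1)) := by ring
    have hsub := intervalIntegral.integral_comp_smul_deriv''' hyp1 hyp2 hyp3 hyp4 hyp5
    rw [hsub, beta_scaled hγ hμ hPsx]
    ring
  -- LHS reduction
  have hL : psiI a Ψ (fun y => psiI a Ψ f μ y) γ x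
      = (Real.Gamma γ)⁻¹ * ((Real.Gamma μ)⁻¹
          * ∫ t in Set.Ioc a x, ∫ s in Set.Ioc a x, F (t, s)) := by
    simp only [psiI, if_neg hγ.ne', if_neg hμ.ne']
    rw [intervalIntegral.integral_of_le hax.le]
    congr 1
    rw [← MeasureTheory.integral_const_mul]
    refine setIntegral_congr_fun measurableSet_Ioc fun t ht => ?_
    have htab : t ∈ Set.Icc a b := ⟨ht.1.le, le_trans ht.2 hxb⟩
    have hin : (∫ s in a..t, deriv Ψ s * (Ψ t - Ψ s) ^ (μ - 1) * f s)
        = ∫ s in Set.Ioc a t, D s * (P t - P s) ^ (μ - 1) * G s := by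
      rw [intervalIntegral.integral_of_le ht.1.le]
      refine setIntegral_congr_fun measurableSet_Ioc fun u hu => ?_
      rw [hDeq u ⟨hu.1.le, le_trans (le_trans hu.2 ht.2) hxb⟩,
        hPeq u ⟨hu.1.le, le_trans (le_trans hu.2 ht.2) hxb⟩, hPeq t htab,
        hGeq u ⟨hu.1.le, le_trans (le_trans hu.2 ht.2) hxb⟩]
    rw [hin, hinner t ht]
    simp only [hKfdef]
    rw [MeasureTheory.integral_const_mul, hDeq t htab, hPeq t htab, hPeq x hxab]
    ring
  -- RHS reduction
  have hR : psiI a Ψ f (γ + μ) x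
      = (Real.Gamma (γ + μ))⁻¹
          * ∫ s in Set.Ioc a x, D s * (P x - P s) ^ (γ + μ - 1) * G s := by
    simp only [psiI, if_neg hγμ]
    rw [intervalIntegral.integral_of_le hax.le]
    congr 1
    refine setIntegral_congr_fun measurableSet_Ioc fun t ht => ?_
    have htab : t ∈ Set.Icc a b := ⟨ht.1.le, le_trans ht.2 hxb⟩
    rw [hDeq t htab, hPeq t htab, hPeq x hxab, hGeq t htab]
  -- swap
  have hswap : (∫ t in Set.Ioc a x, ∫ s in Set.Ioc a x, F (t, s))
      = ∫ s in Set.Ioc a x, ∫ t in Set.Ioc a x, F (t, s) :=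
    MeasureTheory.integral_integral_swap (f := fun t s => F (t, s)) hFint
  -- combine
  have hcomb : (∫ s in Set.Ioc a x, ∫ t in Set.Ioc a x, F (t, s))
      = (Real.Gamma γ * Real.Gamma μ / Real.Gamma (γ + μ))
          * ∫ s in Set.Ioc a x, D s * (P x - P s) ^ (γ + μ - 1) * G s := by
    rw [integral_Ioc_eq_integral_Ioo,
      setIntegral_congr_fun measurableSet_Ioo (fun s hs => houter s hs),
      MeasureTheory.integral_mul_const, ← integral_Ioc_eq_integral_Ioo]
    ring
  rw [hL, hR, hswap, hcomb]
  field_simp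
end
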